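/- arXiv:1408.3183 — 5 statements merged into one kernel-verified Lean document; each statement's English description precedes it below -/
import Mathlib

section
/- Let k > 1/2 be real and ν := (−1 + i·√(4k² − 1))/2. Then for every real z with −1 < z ≤ 1, the value P_ν(z) is a real number and P_ν(z) ≥ 1. Consequently, with C_k := −1/(4·sin(νπ)) > 0, the function z ↦ C_k·P_ν(z) is strictly positive on (−1, 1]; in particular the fundamental solution G_k(x, x₀) = C_k·P_ν(−⟨x, x₀⟩) of the Yukawa–Beltrami operator never vanishes or changes sign for x ≠ x₀ on the unit sphere. -/
open Polynomial

/-- The Legendre function of the first kind of degree `ν`, defined by its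
hypergeometric series. -/
noncomputable def legendreP (ν : ℂ) (z : ℂ) : ℂ :=
  ∑' n : ℕ, ((ascPochhammer ℂ n).eval (-ν) * (ascPochhammer ℂ n).eval (ν + 1))
      / ((n.factorial : ℂ))^2 * ((1 - z) / 2)^n

lemma ascPochhammer_eval_conj (n : ℕ) (x : ℂ) :
    (ascPochhammer ℂ n).eval ((starRingEnd ℂ) x) =
      (starRingEnd ℂ) ((ascPochhammer ℂ n).eval x) := by
  induction n with
  | zero => simp
  | succ n ih =>
    simp [ascPochhammer_succ_right, ih]

set_option maxHeartbeats 1600000 in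
theorem fundamental_solution_positive (k : ℝ) (hk : 1/2 < k) :
    let ν : ℂ := (-1 + Complex.I * Real.sqrt (4*k^2 - 1)) / 2
    let Ck : ℂ := -1 / (4 * Complex.sin (ν * Real.pi))
    ∀ z : ℝ, -1 < z → z ≤ 1 →
      (legendreP ν (z : ℂ)).im = 0 ∧
      1 ≤ (legendreP ν (z : ℂ)).re ∧
      (Ck * legendreP ν (z : ℂ)).im = 0 ∧
      0 < (Ck * legendreP ν (z : ℂ)).re := by
  intro ν Ck z hz1 hz2
  have hνdef : ν = (-1 + Complex.I * Real.sqrt (4*k^2 - 1)) / 2 := rfl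
  have hCkdef : Ck = -1 / (4 * Complex.sin (ν * Real.pi)) := rfl
  clear_value ν Ck
  set s : ℝ := Real.sqrt (4*k^2 - 1) with hs_def
  clear_value s
  have hs : 0 < s := by rw [hs_def]; exact Real.sqrt_pos.mpr (by nlinarith)
  have hconj : (starRingEnd ℂ) (ν + 1) = -ν := by
    rw [hνdef]
    simp only [map_add, map_div₀, map_neg, map_one, map_mul, Complex.conj_I,
      Complex.conj_ofReal, map_ofNat]
    ring
  set r : ℝ := (1 - z) / 2 with hr_def
  clear_value r
  have hr0 : 0 ≤ r := by rw [hr_def]; linarith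
  have hr1 : r < 1 := by rw [hr_def]; linarith
  set a : ℕ → ℂ := fun n => (ascPochhammer ℂ n).eval (ν + 1) with ha_def
  set g : ℕ → ℝ := fun n => Complex.normSq (a n) / (n.factorial : ℝ)^2 * r^n with hg_def
  clear_value a g
  have hgnonneg : ∀ n, 0 ≤ g n := by
    intro n
    simp only [hg_def]
    exact mul_nonneg (div_nonneg (Complex.normSq_nonneg _) (by positivity)) (pow_nonneg hr0 n)
  have hterm : ∀ n : ℕ,
      ((ascPochhammer ℂ n).eval (-ν) * (ascPochhammer ℂ n).eval (ν + 1))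
        / ((n.factorial : ℂ))^2 * ((1 - (z:ℂ)) / 2)^n = ((g n : ℝ) : ℂ) := by
    intro n
    have h0 : (ascPochhammer ℂ n).eval (ν + 1) = a n := by simp only [ha_def]
    have h1 : (ascPochhammer ℂ n).eval (-ν) = (starRingEnd ℂ) (a n) := by
      rw [← hconj, ascPochhammer_eval_conj, h0]
    have h2 : (1 - (z:ℂ)) / 2 = (r : ℂ) := by rw [hr_def]; push_cast; ring
    rw [h1, h0, h2]
    simp only [hg_def]
    have h3 : (starRingEnd ℂ) (a n) * a n = ((Complex.normSq (a n) : ℝ) : ℂ) := by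
      rw [mul_comm, Complex.mul_conj]
    rw [h3]
    push_cast
    ring
  have hg0 : g 0 = 1 := by simp [hg_def, ha_def]
  have hgrec : ∀ n : ℕ, g (n+1) = g n * (Complex.normSq (ν + 1 + n) / (n+1)^2 * r) := by
    intro n
    have ha : a (n+1) = a n * (ν + 1 + n) := by
      simp [ha_def, ascPochhammer_succ_right]
    have hfac : ((n+1).factorial : ℝ) = (n+1) * (n.factorial : ℝ) := by
      rw [Nat.factorial_succ]; push_cast; ring
    simp only [hg_def, ha, Complex.normSq_mul, hfac]
    have h1 : (n.factorial : ℝ) ≠ 0 := Nat.cast_ne_zero.mpr n.factorial_ne_zero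
    have h2 : ((n:ℝ)+1) ≠ 0 := by positivity
    field_simp
    ring
  have hq : ∀ n : ℕ, Complex.normSq (ν + 1 + n) = ((n:ℝ) + 1/2)^2 + s^2/4 := by
    intro n
    have h : ν + 1 + n = ((((n:ℝ) + 1/2) : ℝ) : ℂ) + (((s/2) : ℝ) : ℂ) * Complex.I := by
      rw [hνdef]; push_cast; ring
    rw [h, Complex.normSq_add_mul_I]
    ring
  set r' : ℝ := (1 + r) / 2 with hr'_def
  clear_value r'
  have hr'1 : r' < 1 := by rw [hr'_def]; linarith
  have hrr' : r < r' := by rw [hr'_def]; linarith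
  have hr'0 : 0 ≤ r' := by rw [hr'_def]; linarith
  have hbound : ∀ᶠ n in Filter.atTop, ‖g (n+1)‖ ≤ r' * ‖g n‖ := by
    rcases eq_or_lt_of_le hr0 with hr | hrpos
    · filter_upwards with n
      rw [hgrec n, ← hr]
      simp only [mul_zero, norm_zero]
      exact mul_nonneg hr'0 (norm_nonneg _)
    · set ε : ℝ := r'/r - 1 with hε_def
      have hεpos : 0 < ε := by
        rw [hε_def]
        have := (one_lt_div hrpos).mpr hrr'
        linarith
      obtain ⟨N, hN⟩ := exists_nat_gt (s^2/4 / ε)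
      rw [Filter.eventually_atTop]
      refine ⟨N, fun n hn => ?_⟩
      have hqb : Complex.normSq (ν + 1 + n) ≤ (r'/r) * ((n:ℝ)+1)^2 := by
        rw [hq n]
        have h1 : ((n:ℝ) + 1/2)^2 ≤ ((n:ℝ)+1)^2 := by nlinarith [Nat.cast_nonneg (α := ℝ) n]
        have h2 : s^2/4 ≤ ε * ((n:ℝ)+1)^2 := by
          have hNn : (N:ℝ) ≤ (n:ℝ) := Nat.cast_le.mpr hn
          have h3 : s^2/4 / ε < (n:ℝ) + 1 := by linarith
          have h4 : s^2/4 < ε * ((n:ℝ)+1) := by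
            rwa [div_lt_iff₀ hεpos, mul_comm] at h3
          have h5 : ((n:ℝ)+1) ≤ ((n:ℝ)+1)^2 := by nlinarith [Nat.cast_nonneg (α := ℝ) n]
          nlinarith
        have : (r'/r) = 1 + ε := by rw [hε_def]; ring
        rw [this]
        nlinarith [Nat.cast_nonneg (α := ℝ) n]
      have hfac : Complex.normSq (ν + 1 + n) / ((n:ℝ)+1)^2 * r ≤ r' := by
        have hpos : (0:ℝ) < ((n:ℝ)+1)^2 := by positivity
        rw [div_mul_eq_mul_div, div_le_iff₀ hpos]
        calc Complex.normSq (ν + 1 + n) * r ≤ ((r'/r) * ((n:ℝ)+1)^2) * r := by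
              have := Complex.normSq_nonneg (ν + 1 + n)
              nlinarith
          _ = r' * ((n:ℝ)+1)^2 := by field_simp
      have key : g (n+1) ≤ r' * g n := by
        rw [hgrec n]
        calc g n * (Complex.normSq (ν + 1 + n) / ((n:ℝ)+1)^2 * r)
            ≤ g n * r' := mul_le_mul_of_nonneg_left hfac (hgnonneg n)
          _ = r' * g n := mul_comm _ _
      rw [Real.norm_eq_abs, Real.norm_eq_abs, abs_of_nonneg (hgnonneg (n+1)),
        abs_of_nonneg (hgnonneg n)]
      exact key
  have hsum : Summable g := summable_of_ratio_norm_eventually_le hr'1 hbound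
  have hP : legendreP ν (z:ℂ) = ((∑' n, g n : ℝ) : ℂ) := by
    rw [legendreP, tsum_congr hterm, Complex.ofReal_tsum]
  have hge1 : 1 ≤ ∑' n, g n := by
    have := Summable.le_tsum hsum 0 (fun j _ => hgnonneg j)
    rwa [hg0] at this
  -- compute Ck
  have hc : Complex.sin (ν * Real.pi) = -((Real.cosh (s * Real.pi / 2) : ℝ) : ℂ) := by
    have hν : ν * (Real.pi : ℂ) =
        ((-(Real.pi/2) : ℝ) : ℂ) + ((s * Real.pi / 2 : ℝ) : ℂ) * Complex.I := by
      rw [hνdef]; push_cast; ring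
    rw [hν, Complex.sin_add, ← Complex.ofReal_sin, ← Complex.ofReal_cos,
      Complex.cos_mul_I, Complex.sin_mul_I, ← Complex.ofReal_cosh]
    simp [Real.sin_neg, Real.cos_neg]
  have hcoshpos : 0 < Real.cosh (s * Real.pi / 2) := Real.cosh_pos _
  have hCk : Ck = ((1 / (4 * Real.cosh (s * Real.pi / 2)) : ℝ) : ℂ) := by
    rw [hCkdef, hc]
    have h1 : ((Real.cosh (s * Real.pi / 2) : ℝ) : ℂ) ≠ 0 := by
      exact_mod_cast hcoshpos.ne'
    push_cast
    field_simp
  have hCkpos : 0 < 1 / (4 * Real.cosh (s * Real.pi / 2)) := by positivity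
  refine ⟨?_, ?_, ?_, ?_⟩
  · rw [hP]; simp
  · rw [hP]; simpa using hge1
  · rw [hP, hCk, ← Complex.ofReal_mul]; exact Complex.ofReal_im _
  · rw [hP, hCk, ← Complex.ofReal_mul, Complex.ofReal_re]
    have : (0:ℝ) < ∑' n, g n := lt_of_lt_of_le one_pos hge1
    positivity
end

section
/- For every ν ∈ ℂ and every real z with −1 < z < 3, the Legendre functions satisfy the derivative recurrence (1 − z²)·P_ν′(z) = −(ν + 1)·P_{ν+1}(z) + (ν + 1)·z·P_ν(z), where P_ν′ denotes the derivative of the restriction of P_ν to the real interval (−1, 3). -/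
open Polynomial

private lemma legendre_keyA (ν : ℂ) (n : ℕ) :
    (ν + 1) * ((ascPochhammer ℂ (n+1)).eval (-(ν+1)) * (ascPochhammer ℂ (n+1)).eval (ν+1+1))
      = (2*((n:ℂ)+1) + (ν+1)) *
          ((ascPochhammer ℂ (n+1)).eval (-ν) * (ascPochhammer ℂ (n+1)).eval (ν+1))
        - 2*((n:ℂ)+1)^2*((n:ℂ)+ν+1) *
          ((ascPochhammer ℂ n).eval (-ν) * (ascPochhammer ℂ n).eval (ν+1)) := by
  induction n with
  | zero => simp [ascPochhammer_succ_eval]; ring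
  | succ n ih =>
    simp only [ascPochhammer_succ_eval] at ih ⊢
    push_cast at ih ⊢
    linear_combination (((n:ℂ) - ν) * ((n:ℂ) + ν + 3)) * ih

noncomputable def lCoeff (ν : ℂ) (n : ℕ) : ℂ :=
  ((ascPochhammer ℂ n).eval (-ν) * (ascPochhammer ℂ n).eval (ν + 1)) / ((n.factorial : ℂ))^2

private lemma legendre_keya (ν : ℂ) (n : ℕ) :
    -2*((n:ℂ)+1) * lCoeff ν (n+1) + 2*(n:ℂ) * lCoeff ν n
      = -(ν+1) * lCoeff (ν+1) (n+1) + (ν+1) * lCoeff ν (n+1) - 2*(ν+1) * lCoeff ν n := by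
  have key := legendre_keyA ν n
  have hfac : (((n+1).factorial : ℂ)) = ((n:ℂ)+1) * (n.factorial : ℂ) := by
    push_cast [Nat.factorial_succ]; ring
  have h1 : ((n.factorial : ℂ)) ≠ 0 := by exact_mod_cast Nat.cast_ne_zero.mpr n.factorial_ne_zero
  have h2 : ((n:ℂ)+1) ≠ 0 := Nat.cast_add_one_ne_zero n
  unfold lCoeff
  rw [hfac]
  simp only [ascPochhammer_succ_eval] at key ⊢
  field_simp
  have harg : (-(ν+1) : ℂ) = -1 - ν := by ring
  rw [harg] at key ⊢
  linear_combination key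

private lemma poch_norm_succ (x : ℂ) (n : ℕ) :
    ‖(ascPochhammer ℂ (n+1)).eval x‖ ≤ ‖(ascPochhammer ℂ n).eval x‖ * (‖x‖ + n) := by
  rw [ascPochhammer_succ_eval, norm_mul]
  gcongr
  calc ‖x + (n:ℂ)‖ ≤ ‖x‖ + ‖(n:ℂ)‖ := norm_add_le _ _
    _ = ‖x‖ + n := by simp

private lemma tendsto_aux (a : ℝ) :
    Filter.Tendsto (fun n : ℕ => (a + n) / ((n:ℝ) + 1)) Filter.atTop (nhds 1) := by
  have h : ∀ n : ℕ, (a + n) / ((n:ℝ) + 1) = 1 + (a - 1) / ((n:ℝ) + 1) := by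
    intro n
    have : ((n:ℝ) + 1) ≠ 0 := by positivity
    field_simp
    ring
  simp_rw [h]
  have h2 : Filter.Tendsto (fun n : ℕ => (a - 1) / ((n:ℝ) + 1)) Filter.atTop (nhds 0) := by
    have := (tendsto_const_div_atTop_nhds_zero_nat (a - 1)).comp (Filter.tendsto_add_atTop_nat 1)
    refine this.congr fun n => ?_
    simp [Function.comp]
  simpa using tendsto_const_nhds.add h2

/-- Master summability lemma. -/
private lemma master (x y : ℂ) {r : ℝ} (hr0 : 0 ≤ r) (hr1 : r < 1) :
    Summable (fun n : ℕ => ((n:ℝ)+1) *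
      (‖(ascPochhammer ℂ n).eval x‖ * ‖(ascPochhammer ℂ n).eval y‖) / ((n.factorial:ℝ))^2 * r^n) := by
  set f : ℕ → ℝ := fun n => ((n:ℝ)+1) *
      (‖(ascPochhammer ℂ n).eval x‖ * ‖(ascPochhammer ℂ n).eval y‖) / ((n.factorial:ℝ))^2 * r^n with hf
  have hfnn : ∀ n, 0 ≤ f n := by intro n; positivity
  apply summable_of_ratio_norm_eventually_le (r := (1 + r)/2) (by linarith)
  -- ratio factor
  set c : ℕ → ℝ := fun n => ((n:ℝ)+2)/((n:ℝ)+1) * ((‖x‖ + n)/((n:ℝ)+1)) * ((‖y‖ + n)/((n:ℝ)+1)) * r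
    with hc
  have hcten : Filter.Tendsto c Filter.atTop (nhds r) := by
    have h1 : Filter.Tendsto (fun n : ℕ => ((n:ℝ)+2)/((n:ℝ)+1)) Filter.atTop (nhds 1) := by
      have := tendsto_aux 2; simpa [add_comm] using this
    have h2 := tendsto_aux ‖x‖
    have h3 := tendsto_aux ‖y‖
    have := ((h1.mul h2).mul h3).mul (tendsto_const_nhds (x := r))
    simpa using this
  have hev : ∀ᶠ n in Filter.atTop, c n ≤ (1 + r)/2 :=
    (hcten.eventually_lt_const (by linarith)).mono fun n h => le_of_lt h
  filter_upwards [hev] with n hcn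
  have hfsucc : f (n+1) ≤ c n * f n := by
    have hfac : ((n+1).factorial : ℝ) = ((n:ℝ)+1) * (n.factorial : ℝ) := by
      push_cast [Nat.factorial_succ]; ring
    have h1 : (0:ℝ) < ((n:ℝ)+1) := by positivity
    have h2 : (0:ℝ) < (n.factorial : ℝ) := by positivity
    have hb1 := poch_norm_succ x n
    have hb2 := poch_norm_succ y n
    have hx0 : 0 ≤ ‖x‖ + (n:ℝ) := by positivity
    have hy0 : 0 ≤ ‖y‖ + (n:ℝ) := by positivity
    calc f (n+1) = ((n:ℝ)+2) *
          (‖(ascPochhammer ℂ (n+1)).eval x‖ * ‖(ascPochhammer ℂ (n+1)).eval y‖)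
            / (((n:ℝ)+1) * (n.factorial:ℝ))^2 * (r^n * r) := by
            simp only [hf, hfac]; push_cast; ring
      _ ≤ ((n:ℝ)+2) *
          ((‖(ascPochhammer ℂ n).eval x‖ * (‖x‖ + n)) * (‖(ascPochhammer ℂ n).eval y‖ * (‖y‖ + n)))
            / (((n:ℝ)+1) * (n.factorial:ℝ))^2 * (r^n * r) := by
            gcongr
      _ = c n * f n := by
            simp only [hc, hf]
            field_simp
  calc ‖f (n+1)‖ = f (n+1) := Real.norm_of_nonneg (hfnn _)
    _ ≤ c n * f n := hfsucc
    _ ≤ (1 + r)/2 * f n := by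
        have := hfnn n
        nlinarith [hfnn n]
    _ = (1 + r)/2 * ‖f n‖ := by rw [Real.norm_of_nonneg (hfnn n)]

private lemma norm_lCoeff (ν : ℂ) (n : ℕ) :
    ‖lCoeff ν n‖ = ‖(ascPochhammer ℂ n).eval (-ν)‖ * ‖(ascPochhammer ℂ n).eval (ν+1)‖
      / ((n.factorial:ℝ))^2 := by
  rw [lCoeff, norm_div, norm_mul, norm_pow]
  norm_num

private lemma lCoeff_zero (ν : ℂ) : lCoeff ν 0 = 1 := by
  simp [lCoeff]

private lemma master_regroup (A f rn : ℝ) (n : ℕ) :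
    ((n:ℝ)+1) * A / f^2 * rn = (((n:ℝ)+1) * (A / f^2)) * rn := by ring

/-- summability of the basic series -/
private lemma summable_S1 (ν : ℂ) {r : ℝ} (hr0 : 0 ≤ r) (hr1 : r < 1) {q : ℂ} (hq : ‖q‖ ≤ r) :
    Summable (fun n : ℕ => lCoeff ν n * q^n) := by
  apply Summable.of_norm_bounded (master (-ν) (ν+1) hr0 hr1)
  intro n
  rw [norm_mul, norm_lCoeff, norm_pow, master_regroup]
  set N := ‖(ascPochhammer ℂ n).eval (-ν)‖ * ‖(ascPochhammer ℂ n).eval (ν+1)‖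
      / ((n.factorial:ℝ))^2 with hN
  have hN0 : 0 ≤ N := by rw [hN]; positivity
  have h1 : ‖q‖^n ≤ r^n := pow_le_pow_left₀ (norm_nonneg _) hq n
  have h2 : (0:ℝ) ≤ ‖q‖^n := pow_nonneg (norm_nonneg _) n
  nlinarith [mul_le_mul_of_nonneg_left h1 hN0,
    mul_nonneg (mul_nonneg (Nat.cast_nonneg (α := ℝ) n) hN0) (pow_nonneg hr0 n)]

/-- bound for the differentiated terms -/
private lemma deriv_term_bound (ν : ℂ) {r : ℝ} (hr : 0 < r) {q : ℂ} (hq : ‖q‖ ≤ r) (n : ℕ) :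
    ‖lCoeff ν n * ((n:ℂ) * q^(n-1) * (-1/2))‖
      ≤ (1/(2*r)) * (((n:ℝ)+1) * (‖(ascPochhammer ℂ n).eval (-ν)‖ * ‖(ascPochhammer ℂ n).eval (ν+1)‖)
          / ((n.factorial:ℝ))^2 * r^n) := by
  match n with
  | 0 => simp; positivity
  | (m+1) =>
    rw [norm_mul, norm_mul, norm_mul, norm_lCoeff, norm_pow, master_regroup]
    set N := ‖(ascPochhammer ℂ (m+1)).eval (-ν)‖ * ‖(ascPochhammer ℂ (m+1)).eval (ν+1)‖
        / (((m+1).factorial:ℝ))^2 with hN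
    have hN0 : 0 ≤ N := by rw [hN]; positivity
    have e1 : ‖((m+1 : ℕ):ℂ)‖ = (m:ℝ)+1 := by
      rw [Complex.norm_natCast]; push_cast; ring
    have e2 : ‖(-1/2 : ℂ)‖ = 1/2 := by norm_num
    rw [e1, e2]
    have hqm : ‖q‖^(m+1-1) ≤ r^m := by
      simpa using pow_le_pow_left₀ (norm_nonneg _) hq m
    have hq0 : (0:ℝ) ≤ ‖q‖^(m+1-1) := pow_nonneg (norm_nonneg _) _
    have hr0 : (0:ℝ) ≤ r^m := pow_nonneg hr.le m
    have hrw : (1/(2*r)) * ((((m+1:ℕ):ℝ)+1) * N * r^(m+1)) = (((m:ℝ)+2) * N * r^m) / 2 := by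
      push_cast
      field_simp
      ring
    rw [hrw]
    nlinarith [mul_le_mul_of_nonneg_left hqm hN0]


private lemma summable_gen (ν : ℂ) {r : ℝ} (hr0 : 0 ≤ r) (hr1 : r < 1) {q : ℂ} (hq : ‖q‖ ≤ r)
    (coef : ℕ → ℂ) (C : ℝ) (hC : ∀ n, ‖coef n‖ ≤ C * ((n:ℝ)+1)) (k : ℕ) :
    Summable (fun n : ℕ => coef n * lCoeff ν n * q^(n+k)) := by
  apply Summable.of_norm_bounded ((master (-ν) (ν+1) hr0 hr1).mul_left C)
  intro n
  rw [norm_mul, norm_mul, norm_lCoeff, norm_pow, master_regroup]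
  set N := ‖(ascPochhammer ℂ n).eval (-ν)‖ * ‖(ascPochhammer ℂ n).eval (ν+1)‖
      / ((n.factorial:ℝ))^2 with hN
  have hN0 : 0 ≤ N := by rw [hN]; positivity
  have hC0 : 0 ≤ C := le_trans (norm_nonneg (coef 0)) (by simpa using hC 0)
  have h1 : ‖q‖^(n+k) ≤ r^n := by
    calc ‖q‖^(n+k) ≤ r^(n+k) := pow_le_pow_left₀ (norm_nonneg _) hq _
      _ ≤ r^n := pow_le_pow_of_le_one hr0 hr1.le (Nat.le_add_right n k)
  have h2 : (0:ℝ) ≤ ‖q‖^(n+k) := pow_nonneg (norm_nonneg _) _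
  have h3 : (0:ℝ) ≤ r^n := pow_nonneg hr0 n
  have h4 := hC n
  have h5 : ‖coef n‖ * N * ‖q‖^(n+k) ≤ (C * ((n:ℝ)+1)) * N * r^n := by
    have hcn : 0 ≤ ‖coef n‖ := norm_nonneg _
    nlinarith [mul_le_mul_of_nonneg_left h1 (mul_nonneg hcn hN0),
      mul_le_mul_of_nonneg_right (mul_le_mul_of_nonneg_right h4 hN0) h3]
  calc ‖coef n‖ * N * ‖q‖^(n+k) ≤ (C * ((n:ℝ)+1)) * N * r^n := h5
    _ = C * (((n:ℝ)+1) * N * r^n) := by ring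

theorem legendreP_derivative_recurrence (ν : ℂ) :
    ∀ z : ℝ, -1 < z → z < 3 →
      (1 - (z : ℂ)^2) * deriv (fun x : ℝ => legendreP ν (x : ℂ)) z
        = -(ν + 1) * legendreP (ν + 1) (z : ℂ)
          + (ν + 1) * (z : ℂ) * legendreP ν (z : ℂ) := by
  
  intro z hm1 h3
  set w : ℂ := (1 - (z:ℂ))/2 with hw
  have hwnorm : ‖w‖ = |1 - z|/2 := by
    rw [hw]
    have h : ((1:ℂ) - (z:ℂ))/2 = (((1 - z)/2 : ℝ) : ℂ) := by push_cast; ring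
    rw [h, Complex.norm_real, Real.norm_eq_abs, abs_div]
    norm_num
  have habs : |1 - z| < 2 := abs_sub_lt_iff.mpr ⟨by linarith, by linarith⟩
  have hw1 : ‖w‖ < 1 := by rw [hwnorm]; linarith
  have hw0 : (0:ℝ) ≤ ‖w‖ := norm_nonneg w
  set r : ℝ := (‖w‖ + 1)/2 with hr
  have hr0 : 0 < r := by rw [hr]; linarith
  have hr1 : r < 1 := by rw [hr]; linarith
  have hwr : ‖w‖ ≤ r := by rw [hr]; linarith
  set T : Set ℝ := Set.Ioo (1 - 2*r) (1 + 2*r) with hT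
  have hzT : z ∈ T := by
    rw [hT]
    have hwlt : ‖w‖ < r := by rw [hr]; linarith
    have h4 : |1 - z| < 2*r := by rw [hwnorm] at hwlt; linarith
    have h5 := abs_lt.mp h4
    exact ⟨by linarith [h5.2], by linarith [h5.1]⟩
  have hqT : ∀ x : ℝ, x ∈ T → ‖(1 - (x:ℂ))/2‖ ≤ r := by
    intro x hx
    rw [hT, Set.mem_Ioo] at hx
    have h : ((1:ℂ) - (x:ℂ))/2 = (((1 - x)/2 : ℝ) : ℂ) := by push_cast; ring
    rw [h, Complex.norm_real, Real.norm_eq_abs, abs_div]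
    have h6 : |1 - x| ≤ 2*r := by
      rw [abs_le]; exact ⟨by linarith [hx.2], by linarith [hx.1]⟩
    rw [abs_of_pos (by norm_num : (0:ℝ) < 2)]
    linarith
  -- termwise derivatives
  have hgderiv : ∀ (n : ℕ) (x : ℝ), x ∈ T →
      HasDerivAt (fun y : ℝ => lCoeff ν n * ((1 - (y:ℂ))/2)^n)
        (lCoeff ν n * ((n:ℂ) * ((1 - (x:ℂ))/2)^(n-1) * (-1/2))) x := by
    intro n x _
    have hbase : HasDerivAt (fun u : ℂ => (1 - u)/2) ((-1)/2) (x:ℂ) := by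
      simpa using ((hasDerivAt_id (x:ℂ)).const_sub 1).div_const 2
    have hpow := hbase.pow n
    have hmul := hpow.const_mul (lCoeff ν n)
    have := hmul.comp_ofReal
    simpa using this
  have hu : Summable (fun n : ℕ => (1/(2*r)) * (((n:ℝ)+1) *
      (‖(ascPochhammer ℂ n).eval (-ν)‖ * ‖(ascPochhammer ℂ n).eval (ν+1)‖)
        / ((n.factorial:ℝ))^2 * r^n)) :=
    (master (-ν) (ν+1) hr0.le hr1).mul_left _
  have hg0 : Summable (fun n : ℕ => lCoeff ν n * ((1 - (z:ℂ))/2)^n) :=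
    summable_S1 ν hr0.le hr1 (hqT z hzT)
  have hder : HasDerivAt (fun x : ℝ => ∑' n : ℕ, lCoeff ν n * ((1 - (x:ℂ))/2)^n)
      (∑' n : ℕ, lCoeff ν n * ((n:ℂ) * ((1 - (z:ℂ))/2)^(n-1) * (-1/2))) z :=
    hasDerivAt_tsum_of_isPreconnected hu isOpen_Ioo isPreconnected_Ioo
      hgderiv (fun n x hx => deriv_term_bound ν hr0 (hqT x hx) n) hzT hg0 hzT
  have hfun : (fun x : ℝ => legendreP ν (x:ℂ))
      = fun x : ℝ => ∑' n : ℕ, lCoeff ν n * ((1 - (x:ℂ))/2)^n := by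
    funext x; simp only [legendreP, lCoeff]
  set D : ℂ := ∑' n : ℕ, lCoeff ν n * ((n:ℂ) * ((1 - (z:ℂ))/2)^(n-1) * (-1/2)) with hD
  have hderiv_eq : deriv (fun x : ℝ => legendreP ν (x:ℂ)) z = D := by
    rw [hfun]; exact hder.deriv
  -- hasSum chains
  have hSd : Summable (fun n : ℕ => lCoeff ν n * ((n:ℂ) * w^(n-1) * (-1/2))) := by
    apply Summable.of_norm_bounded hu
    intro n
    exact deriv_term_bound ν hr0 hwr n
  have hDsum : HasSum (fun n : ℕ => lCoeff ν n * ((n:ℂ) * w^(n-1) * (-1/2))) D := by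
    rw [hD]; exact hSd.hasSum
  have hL : HasSum (fun n : ℕ => (1 - (z:ℂ)^2) * (lCoeff ν n * ((n:ℂ) * w^(n-1) * (-1/2))))
      ((1 - (z:ℂ)^2) * D) := hDsum.mul_left _
  have hz2 : (1 - (z:ℂ)^2) = 4*w*(1-w) := by rw [hw]; ring
  have hzw : (z:ℂ) = 1 - 2*w := by rw [hw]; ring
  -- split LHS
  have hsplit : (fun n : ℕ => (1 - (z:ℂ)^2) * (lCoeff ν n * ((n:ℂ) * w^(n-1) * (-1/2))))
      = fun n : ℕ => (-2*(n:ℂ)) * lCoeff ν n * w^(n+0) + (2*(n:ℂ)) * lCoeff ν n * w^(n+1) := by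
    funext n
    rw [hz2]
    cases n with
    | zero => simp
    | succ m =>
      have hpow : w^(m+1-1) = w^m := by norm_num
      rw [hpow]
      push_cast
      ring
  rw [hsplit] at hL
  have hsY1 : Summable (fun n : ℕ => (-2*(n:ℂ)) * lCoeff ν n * w^(n+0)) := by
    apply summable_gen ν hr0.le hr1 hwr _ 2
    intro n
    rw [norm_mul]
    have : ‖(-2 : ℂ)‖ = 2 := by norm_num
    rw [this, Complex.norm_natCast]
    nlinarith [Nat.cast_nonneg (α := ℝ) n]
  have hsY2 : Summable (fun n : ℕ => (2*(n:ℂ)) * lCoeff ν n * w^(n+1)) := by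
    apply summable_gen ν hr0.le hr1 hwr _ 2
    intro n
    rw [norm_mul]
    have : ‖(2 : ℂ)‖ = 2 := by norm_num
    rw [this, Complex.norm_natCast]
    nlinarith [Nat.cast_nonneg (α := ℝ) n]
  have hLeq : (1 - (z:ℂ)^2) * D
      = (∑' n : ℕ, (-2*(n:ℂ)) * lCoeff ν n * w^(n+0)) + ∑' n : ℕ, (2*(n:ℂ)) * lCoeff ν n * w^(n+1) :=
    hL.unique (hsY1.hasSum.add hsY2.hasSum)
  -- shift the first left series
  have hshift : HasSum (fun n : ℕ => (-2*((n:ℕ)+1:ℂ)) * lCoeff ν (n+1) * w^(n+1))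
      (∑' n : ℕ, (-2*(n:ℂ)) * lCoeff ν n * w^(n+0)) := by
    have h0 : ((-2*((0:ℕ):ℂ)) * lCoeff ν 0 * w^(0+0)) = 0 := by simp
    have := (hasSum_nat_add_iff (f := fun n : ℕ => (-2*(n:ℂ)) * lCoeff ν n * w^(n+0)) 1).2
      (by simpa [h0] using hsY1.hasSum)
    simpa [Nat.cast_add] using this
  -- RHS series
  have hPν : legendreP ν (z:ℂ) = ∑' n : ℕ, lCoeff ν n * w^n := by
    rw [hw]; simp only [legendreP, lCoeff]
  have hPν' : legendreP (ν+1) (z:ℂ) = ∑' n : ℕ, lCoeff (ν+1) n * w^n := by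
    rw [hw]; simp only [legendreP, lCoeff]
  have ha : HasSum (fun n : ℕ => lCoeff ν n * w^n) (legendreP ν (z:ℂ)) := by
    rw [hPν]; exact (summable_S1 ν hr0.le hr1 hwr).hasSum
  have hb : HasSum (fun n : ℕ => lCoeff (ν+1) n * w^n) (legendreP (ν+1) (z:ℂ)) := by
    rw [hPν']; exact (summable_S1 (ν+1) hr0.le hr1 hwr).hasSum
  have hZ1 : HasSum (fun n : ℕ => (-(ν+1)) * (lCoeff (ν+1) n * w^n) + (ν+1) * (lCoeff ν n * w^n))
      ((-(ν+1)) * legendreP (ν+1) (z:ℂ) + (ν+1) * legendreP ν (z:ℂ)) :=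
    (hb.mul_left _).add (ha.mul_left _)
  have hZ10 : (-(ν+1)) * (lCoeff (ν+1) 0 * w^0) + (ν+1) * (lCoeff ν 0 * w^0) = 0 := by
    simp [lCoeff_zero]
  have hZ1shift : HasSum
      (fun n : ℕ => (-(ν+1)) * (lCoeff (ν+1) (n+1) * w^(n+1)) + (ν+1) * (lCoeff ν (n+1) * w^(n+1)))
      ((-(ν+1)) * legendreP (ν+1) (z:ℂ) + (ν+1) * legendreP ν (z:ℂ)) := by
    refine (hasSum_nat_add_iff
      (f := fun n : ℕ => (-(ν+1)) * (lCoeff (ν+1) n * w^n) + (ν+1) * (lCoeff ν n * w^n)) 1).2 ?_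
    rw [Finset.sum_range_one]
    rw [show (-(ν+1)) * (lCoeff (ν+1) 0 * w^0) + (ν+1) * (lCoeff ν 0 * w^0) = 0 from hZ10,
      add_zero]
    exact hZ1
  have hZ2 : HasSum (fun n : ℕ => (-2*(ν+1)*w) * (lCoeff ν n * w^n))
      ((-2*(ν+1)*w) * legendreP ν (z:ℂ)) := ha.mul_left _
  have hR : HasSum (fun n : ℕ =>
      ((-(ν+1)) * (lCoeff (ν+1) (n+1) * w^(n+1)) + (ν+1) * (lCoeff ν (n+1) * w^(n+1)))
        + (-2*(ν+1)*w) * (lCoeff ν n * w^n))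
      (((-(ν+1)) * legendreP (ν+1) (z:ℂ) + (ν+1) * legendreP ν (z:ℂ))
        + (-2*(ν+1)*w) * legendreP ν (z:ℂ)) := hZ1shift.add hZ2
  -- termwise identity
  have hterm : (fun n : ℕ => (-2*((n:ℕ)+1:ℂ)) * lCoeff ν (n+1) * w^(n+1)
        + (2*(n:ℂ)) * lCoeff ν n * w^(n+1))
      = fun n : ℕ =>
        ((-(ν+1)) * (lCoeff (ν+1) (n+1) * w^(n+1)) + (ν+1) * (lCoeff ν (n+1) * w^(n+1)))
          + (-2*(ν+1)*w) * (lCoeff ν n * w^n) := by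
    funext n
    have hk := legendre_keya ν n
    have hps : w * w^n = w^(n+1) := by rw [pow_succ]; ring
    linear_combination (w^(n+1)) * hk + ((-2*(ν+1)) * lCoeff ν n) * hps
  have hLHS : HasSum (fun n : ℕ => (-2*((n:ℕ)+1:ℂ)) * lCoeff ν (n+1) * w^(n+1)
        + (2*(n:ℂ)) * lCoeff ν n * w^(n+1)) ((1 - (z:ℂ)^2) * D) := by
    rw [hLeq]; exact hshift.add hsY2.hasSum
  rw [hterm] at hLHS
  have hfinal := hLHS.unique hR
  rw [hderiv_eq, hfinal, hzw]
  ring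
end

section
/- Let k > 1/2 be real and ν := (−1 + i·√(4k² − 1))/2. Then lim_{z→1⁻} (ν + 1)·[ P_{ν+1}(−z) + z·P_ν(−z) ] = −(2/π)·sin(νπ) = (2/π)·cosh((π/2)·√(4k² − 1)). Equivalently, with C_k := −1/(4·sin(νπ)), the function F(θ) := C_k·(ν + 1)·[ P_{ν+1}(−cos θ) + cos θ · P_ν(−cos θ) ] tends to 1/(2π) as θ → 0⁺. -/
open Polynomial Filter Topology

noncomputable def PPaux (μ : ℂ) (n : ℕ) : ℂ :=
  (ascPochhammer ℂ n).eval (-μ) * (ascPochhammer ℂ n).eval (μ + 1)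

lemma PPaux_zero (μ : ℂ) : PPaux μ 0 = 1 := by simp [PPaux]

lemma PPaux_succ (μ : ℂ) (n : ℕ) :
    PPaux μ (n + 1) = PPaux μ n * ((-μ + n) * (μ + 1 + n)) := by
  simp only [PPaux, ascPochhammer_succ_eval]; ring

lemma ascPochhammer_eval_prod (c : ℂ) (n : ℕ) :
    (ascPochhammer ℂ n).eval c = ∏ j ∈ Finset.range n, (c + j) := by
  induction n with
  | zero => simp
  | succ n ih => rw [ascPochhammer_succ_eval, ih, Finset.prod_range_succ]

lemma key_id (ν : ℂ) (hν1 : ν + 1 ≠ 0) (m : ℕ) :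
    (ν + 1) * (PPaux (ν + 1) (m + 1) - PPaux ν (m + 1))
      = -2 * ((m : ℂ) + 1) * (ν + 1) * (ν + (m : ℂ) + 1) * PPaux ν m := by
  have e1 : (ascPochhammer ℂ (m + 1)).eval (-(ν + 1))
      = (-(ν + 1)) * (ascPochhammer ℂ m).eval (-ν) := by
    rw [ascPochhammer_succ_left]
    simp only [eval_mul, eval_X, eval_comp, eval_add, eval_one]
    ring_nf
  have e2 : (ascPochhammer ℂ (m + 1)).eval (ν + 1 + 1)
      = (ascPochhammer ℂ m).eval (ν + 1 + 1) * (ν + 1 + 1 + m) :=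
    ascPochhammer_succ_eval m _
  have e3 : (ν + 1) * (ascPochhammer ℂ m).eval (ν + 1 + 1)
      = (ascPochhammer ℂ m).eval (ν + 1) * (ν + 1 + m) := by
    have h1 : (ascPochhammer ℂ (m + 1)).eval (ν + 1)
        = (ν + 1) * (ascPochhammer ℂ m).eval (ν + 1 + 1) := by
      rw [ascPochhammer_succ_left]
      simp only [eval_mul, eval_X, eval_comp, eval_add, eval_one]
    rw [← h1, ascPochhammer_succ_eval]
  unfold PPaux
  rw [e1, e2]
  simp only [ascPochhammer_succ_eval]
  linear_combination (-(ν + 1) * (ascPochhammer ℂ m).eval (-ν) * (ν + 1 + 1 + (m:ℂ))) * e3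

noncomputable def Sser (μ : ℂ) (x : ℂ) : ℂ :=
  ∑' n : ℕ, PPaux μ n / ((n.factorial : ℂ))^2 * x^n

lemma term_ratio (μ : ℂ) (x : ℂ) (n : ℕ) :
    PPaux μ (n+1) / (((n+1).factorial : ℂ))^2 * x^(n+1)
      = (PPaux μ n / ((n.factorial : ℂ))^2 * x^n)
        * (((-μ + n) * (μ + 1 + n)) / ((n : ℂ) + 1)^2 * x) := by
  have h1 : (((n+1).factorial : ℕ) : ℂ) = ((n : ℂ) + 1) * (n.factorial : ℂ) := by
    push_cast [Nat.factorial_succ]; ring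
  have hn : ((n : ℂ) + 1) ≠ 0 := by
    exact_mod_cast Nat.succ_ne_zero n
  have hf : ((n.factorial : ℕ) : ℂ) ≠ 0 := Nat.cast_ne_zero.mpr (Nat.factorial_ne_zero n)
  rw [PPaux_succ, h1]
  field_simp
  ring

lemma tendsto_inv_nat_add_one :
    Tendsto (fun n : ℕ => ((n : ℂ) + 1)⁻¹) atTop (𝓝 0) := by
  have h : Tendsto (fun n : ℕ => ((1 / ((n : ℝ) + 1) : ℝ) : ℂ)) atTop (𝓝 ((0:ℝ):ℂ)) :=
    (Complex.continuous_ofReal.tendsto _).comp tendsto_one_div_add_atTop_nhds_zero_nat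
  simpa [one_div] using h

lemma summable_Sser (μ : ℂ) (x : ℂ) (hx : ‖x‖ < 1) :
    Summable (fun n : ℕ => PPaux μ n / ((n.factorial : ℂ))^2 * x^n) := by
  set r : ℝ := (1 + ‖x‖)/2 with hr
  have hr1 : r < 1 := by rw [hr]; linarith
  have hg : Tendsto (fun n : ℕ => ((-μ + n) * (μ + 1 + n)) / ((n : ℂ) + 1)^2 * x)
      atTop (𝓝 x) := by
    have heq : ∀ n : ℕ, ((-μ + n) * (μ + 1 + n)) / ((n : ℂ) + 1)^2 * x
        = (1 - ((n:ℂ)+1)⁻¹ - (μ * (μ + 1)) * ((n:ℂ)+1)⁻¹ * ((n:ℂ)+1)⁻¹) * x := by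
      intro n
      have hn : ((n : ℂ) + 1) ≠ 0 := by
        exact_mod_cast Nat.succ_ne_zero n
      field_simp
      ring
    simp only [heq]
    have := (((tendsto_const_nhds (x := (1:ℂ))).sub tendsto_inv_nat_add_one).sub
      (((tendsto_const_nhds (x := μ * (μ+1))).mul tendsto_inv_nat_add_one).mul
        tendsto_inv_nat_add_one)).mul (tendsto_const_nhds (x := x))
    simpa using this
  have hgn : Tendsto (fun n : ℕ => ‖((-μ + n) * (μ + 1 + n)) / ((n : ℂ) + 1)^2 * x‖)
      atTop (𝓝 ‖x‖) := hg.norm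
  have hev : ∀ᶠ n : ℕ in atTop, ‖((-μ + n) * (μ + 1 + n)) / ((n : ℂ) + 1)^2 * x‖ ≤ r := by
    have : ‖x‖ < r := by rw [hr]; linarith
    exact hgn.eventually_le_const this
  refine summable_of_ratio_norm_eventually_le hr1 ?_
  filter_upwards [hev] with n hn
  rw [term_ratio, norm_mul, mul_comm]
  exact mul_le_mul_of_nonneg_right hn (norm_nonneg _)

lemma hasSum_main (ν : ℂ) (hν1 : ν + 1 ≠ 0) (x : ℂ) (hx : ‖x‖ < 1) :
    HasSum (fun m : ℕ => -2 * ν * (ν + 1) * PPaux ν m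
        / (((m+1).factorial : ℂ) * (m.factorial : ℂ)) * x^(m+1))
      ((ν + 1) * (Sser (ν + 1) x + (2*x - 1) * Sser ν x)) := by
  have hs1 : HasSum (fun n : ℕ => PPaux (ν+1) n / ((n.factorial : ℂ))^2 * x^n)
      (Sser (ν+1) x) := (summable_Sser (ν+1) x hx).hasSum
  have hs2 : HasSum (fun n : ℕ => PPaux ν n / ((n.factorial : ℂ))^2 * x^n)
      (Sser ν x) := (summable_Sser ν x hx).hasSum
  have hu : HasSum (fun n : ℕ => (ν+1) * ((PPaux (ν+1) n - PPaux ν n) / ((n.factorial : ℂ))^2 * x^n))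
      ((ν+1) * (Sser (ν+1) x - Sser ν x)) := by
    have hfun : (fun n : ℕ => (ν+1) * ((PPaux (ν+1) n - PPaux ν n) / ((n.factorial : ℂ))^2 * x^n))
        = (fun n : ℕ => (ν+1) * (PPaux (ν+1) n / ((n.factorial : ℂ))^2 * x^n
            - PPaux ν n / ((n.factorial : ℂ))^2 * x^n)) := by
      funext n; ring
    rw [hfun]
    exact (hs1.sub hs2).mul_left _
  have hushift : HasSum (fun m : ℕ =>
      (ν+1) * ((PPaux (ν+1) (m+1) - PPaux ν (m+1)) / (((m+1).factorial : ℂ))^2 * x^(m+1)))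
      ((ν+1) * (Sser (ν+1) x - Sser ν x)) := by
    have h0 : ∑ i ∈ Finset.range 1,
        (ν+1) * ((PPaux (ν+1) i - PPaux ν i) / ((i.factorial : ℂ))^2 * x^i) = 0 := by
      simp [PPaux_zero]
    have h := (hasSum_nat_add_iff' (f := fun n : ℕ =>
      (ν+1) * ((PPaux (ν+1) n - PPaux ν n) / ((n.factorial : ℂ))^2 * x^n)) 1).mpr hu
    rw [h0, sub_zero] at h
    exact h
  have hv : HasSum (fun m : ℕ => 2 * (ν+1) * (PPaux ν m / ((m.factorial : ℂ))^2 * x^(m+1)))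
      (2 * (ν+1) * x * Sser ν x) := by
    have hfun : (fun m : ℕ => 2 * (ν+1) * (PPaux ν m / ((m.factorial : ℂ))^2 * x^(m+1)))
        = (fun m : ℕ => (PPaux ν m / ((m.factorial : ℂ))^2 * x^m) * (2 * (ν+1) * x)) := by
      funext m; ring
    rw [hfun]
    have := hs2.mul_right (2 * (ν+1) * x)
    convert this using 1
    · rfl
    ring
  have hw := hushift.add hv
  have hval : (ν+1) * (Sser (ν+1) x - Sser ν x) + 2 * (ν+1) * x * Sser ν x
      = (ν + 1) * (Sser (ν + 1) x + (2*x - 1) * Sser ν x) := by ring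
  rw [hval] at hw
  have hfun : (fun m : ℕ =>
      (ν+1) * ((PPaux (ν+1) (m+1) - PPaux ν (m+1)) / (((m+1).factorial : ℂ))^2 * x^(m+1))
        + 2 * (ν+1) * (PPaux ν m / ((m.factorial : ℂ))^2 * x^(m+1)))
      = (fun m : ℕ => -2 * ν * (ν + 1) * PPaux ν m
        / (((m+1).factorial : ℂ) * (m.factorial : ℂ)) * x^(m+1)) := by
    funext m
    have hdiff : PPaux (ν+1) (m+1) - PPaux ν (m+1)
        = -2 * ((m : ℂ) + 1) * (ν + (m : ℂ) + 1) * PPaux ν m := by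
      apply mul_left_cancel₀ hν1
      have := key_id ν hν1 m
      linear_combination this
    have hfact : (((m+1).factorial : ℕ) : ℂ) = ((m : ℂ) + 1) * (m.factorial : ℂ) := by
      push_cast [Nat.factorial_succ]; ring
    have hm : ((m : ℂ) + 1) ≠ 0 := by exact_mod_cast Nat.succ_ne_zero m
    have hf : ((m.factorial : ℕ) : ℂ) ≠ 0 := Nat.cast_ne_zero.mpr (Nat.factorial_ne_zero m)
    rw [hdiff, hfact]
    field_simp
    ring
  rw [hfun] at hw
  exact hw

lemma tendsto_M_PP (ν : ℂ) (hne : ∀ m : ℕ, -ν ≠ -(m : ℂ)) (hne2 : ∀ m : ℕ, ν + 1 ≠ -(m : ℂ)) :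
    Tendsto (fun M : ℕ => (M : ℂ) * PPaux ν M / ((M.factorial : ℂ))^2) atTop
      (𝓝 (Complex.sin ((Real.pi : ℂ) * -ν) / (Real.pi : ℂ))) := by
  set a : ℂ := -ν with ha
  set b : ℂ := ν + 1 with hb
  have hab : a + b = 1 := by rw [ha, hb]; ring
  have hfa : ∀ j : ℕ, a + j ≠ 0 := by
    intro j h
    exact hne j (by linear_combination h)
  have hfb : ∀ j : ℕ, b + j ≠ 0 := by
    intro j h
    exact hne2 j (by linear_combination h)
  have hPa : ∀ n : ℕ, (∏ j ∈ Finset.range (n+1), (a + j)) ≠ 0 :=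
    fun n => Finset.prod_ne_zero_iff.mpr (fun j _ => hfa j)
  have hPb : ∀ n : ℕ, (∏ j ∈ Finset.range (n+1), (b + j)) ≠ 0 :=
    fun n => Finset.prod_ne_zero_iff.mpr (fun j _ => hfb j)
  have hkey : ∀ n : ℕ, 1 ≤ n →
      ((n+1 : ℕ) : ℂ) * PPaux ν (n+1) / (((n+1).factorial : ℂ))^2
        = ((n : ℂ) / ((n : ℂ) + 1)) / (Complex.GammaSeq a n * Complex.GammaSeq b n) := by
    intro n hn
    have hn0 : (n : ℂ) ≠ 0 := Nat.cast_ne_zero.mpr (by omega)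
    have hn1 : ((n : ℂ) + 1) ≠ 0 := by exact_mod_cast Nat.succ_ne_zero n
    have hf : ((n.factorial : ℕ) : ℂ) ≠ 0 := Nat.cast_ne_zero.mpr (Nat.factorial_ne_zero n)
    have hAB : (n : ℂ)^a * (n : ℂ)^b = (n : ℂ) := by
      rw [← Complex.cpow_add _ _ hn0, hab, Complex.cpow_one]
    have hGS : Complex.GammaSeq a n * Complex.GammaSeq b n
        = ((n : ℂ) * ((n.factorial : ℕ) : ℂ)^2)
          / ((∏ j ∈ Finset.range (n+1), (a + j)) * (∏ j ∈ Finset.range (n+1), (b + j))) := by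
      rw [Complex.GammaSeq, Complex.GammaSeq, div_mul_div_comm]
      congr 1
      linear_combination (((n.factorial : ℕ) : ℂ))^2 * hAB
    have hPP : PPaux ν (n+1)
        = (∏ j ∈ Finset.range (n+1), (a + j)) * (∏ j ∈ Finset.range (n+1), (b + j)) := by
      rw [PPaux, ascPochhammer_eval_prod, ascPochhammer_eval_prod, ← ha, ← hb]
    have hfact : (((n+1).factorial : ℕ) : ℂ) = ((n : ℂ) + 1) * ((n.factorial : ℕ) : ℂ) := by
      push_cast [Nat.factorial_succ]; ring
    rw [hGS, hPP, hfact]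
    push_cast
    field_simp
  have hΓ := (Complex.GammaSeq_tendsto_Gamma a).mul (Complex.GammaSeq_tendsto_Gamma b)
  have hΓne : Complex.Gamma a * Complex.Gamma b ≠ 0 :=
    mul_ne_zero (Complex.Gamma_ne_zero hne) (Complex.Gamma_ne_zero hne2)
  have hnd := (tendsto_natCast_div_add_atTop (1 : ℂ)).div hΓ hΓne
  have hval : (1 : ℂ) / (Complex.Gamma a * Complex.Gamma b)
      = Complex.sin ((Real.pi : ℂ) * -ν) / (Real.pi : ℂ) := by
    have hb1 : b = 1 - a := by rw [ha, hb]; ring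
    rw [hb1, Complex.Gamma_mul_Gamma_one_sub, one_div_div, ha]
  have hshift : Tendsto (fun n : ℕ => ((n+1 : ℕ) : ℂ) * PPaux ν (n+1) / (((n+1).factorial : ℂ))^2)
      atTop (𝓝 (Complex.sin ((Real.pi : ℂ) * -ν) / (Real.pi : ℂ))) := by
    rw [← hval]
    refine Tendsto.congr' ?_ hnd
    filter_upwards [eventually_ge_atTop 1] with n hn
    exact (hkey n hn).symm
  exact (tendsto_add_atTop_iff_nat 1).mp hshift

noncomputable def paux (k : ℝ) (m : ℕ) : ℝ := ∏ j ∈ Finset.range m, ((j:ℝ)^2 + j + k^2)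

noncomputable def qaux (k : ℝ) (m : ℕ) : ℝ :=
  paux k m / (((m+1).factorial : ℝ) * (m.factorial : ℝ))

lemma paux_pos {k : ℝ} (hk : 0 < k) (m : ℕ) : 0 < paux k m := by
  apply Finset.prod_pos
  intro j _
  positivity

lemma qaux_nonneg {k : ℝ} (hk : 0 < k) (m : ℕ) : 0 ≤ qaux k m := by
  have := paux_pos hk m
  have h1 : (0:ℝ) < ((m+1).factorial : ℝ) := by positivity
  have h2 : (0:ℝ) < (m.factorial : ℝ) := by positivity
  unfold qaux
  positivity

lemma PP_eq_ofReal (ν : ℂ) (k : ℝ) (hνν : ν * (ν + 1) = -((k^2 : ℝ) : ℂ)) :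
    ∀ m, PPaux ν m = ((paux k m : ℝ) : ℂ) := by
  intro m
  induction m with
  | zero => simp [PPaux_zero, paux]
  | succ m ih =>
    rw [PPaux_succ, ih]
    have h1 : (-ν + (m:ℂ)) * (ν + 1 + (m:ℂ)) = ((m:ℂ)^2 + (m:ℂ) + ((k:ℝ):ℂ)^2) := by
      push_cast at hνν ⊢
      linear_combination -hνν
    rw [h1]
    rw [show paux k (m+1) = paux k m * ((m:ℝ)^2 + m + k^2) from Finset.prod_range_succ _ m]
    push_cast
    ring

lemma sum_qaux {k : ℝ} (hk : 0 < k) :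
    ∀ M : ℕ, ∑ m ∈ Finset.range M, qaux k m
      = (M : ℝ) * paux k M / (k^2 * ((M.factorial : ℝ))^2) := by
  intro M
  induction M with
  | zero => simp
  | succ M ih =>
    rw [Finset.sum_range_succ, ih]
    have hp : paux k (M+1) = paux k M * ((M:ℝ)^2 + M + k^2) := Finset.prod_range_succ _ M
    have hfact : (((M+1).factorial : ℕ) : ℝ) = ((M : ℝ) + 1) * ((M.factorial : ℕ) : ℝ) := by
      push_cast [Nat.factorial_succ]; ring
    have hM : ((M : ℝ) + 1) ≠ 0 := by positivity
    have hf : ((M.factorial : ℕ) : ℝ) ≠ 0 := by positivity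
    have hk0 : k ≠ 0 := ne_of_gt hk
    rw [qaux, hp, hfact]
    push_cast
    field_simp

lemma sin_nu_pi_eval (t : ℝ) :
    Complex.sin (((-1 + Complex.I * (t:ℝ))/2) * (Real.pi : ℂ))
      = -((Real.cosh (Real.pi/2 * t) : ℝ) : ℂ) := by
  have h : ((-1 + Complex.I * (t:ℝ))/2) * (Real.pi : ℂ)
      = ((-(Real.pi/2) : ℝ) : ℂ) + ((Real.pi/2*t : ℝ) : ℂ) * Complex.I := by
    push_cast; ring
  rw [h, Complex.sin_add, Complex.cos_mul_I, Complex.sin_mul_I]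
  rw [← Complex.ofReal_sin, ← Complex.ofReal_cos, ← Complex.ofReal_cosh]
  simp [Real.sin_pi_div_two, Real.cos_pi_div_two]

lemma hasSum_qaux (k t L : ℝ) (ν : ℂ) (hk : 0 < k)
    (hνν : ν * (ν + 1) = -((k^2 : ℝ) : ℂ))
    (hne : ∀ m : ℕ, -ν ≠ -(m : ℂ)) (hne2 : ∀ m : ℕ, ν + 1 ≠ -(m : ℂ))
    (hL : Complex.sin ((Real.pi : ℂ) * -ν) / (Real.pi : ℂ) = ((L : ℝ) : ℂ)) :
    HasSum (qaux k) (L / k^2) := by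
  have hlim := tendsto_M_PP ν hne hne2
  rw [hL] at hlim
  have hk2 : ((k^2 : ℝ) : ℂ) ≠ 0 := by
    simp only [ne_eq, Complex.ofReal_eq_zero]
    positivity
  have hdiv : Tendsto (fun M : ℕ => ((M : ℂ) * PPaux ν M / ((M.factorial : ℂ))^2) / ((k^2 : ℝ) : ℂ))
      atTop (𝓝 (((L : ℝ) : ℂ) / ((k^2 : ℝ) : ℂ))) := hlim.div_const _
  have heq : ∀ M : ℕ, ((M : ℂ) * PPaux ν M / ((M.factorial : ℂ))^2) / ((k^2 : ℝ) : ℂ)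
      = (((∑ m ∈ Finset.range M, qaux k m : ℝ)) : ℂ) := by
    intro M
    rw [sum_qaux hk, PP_eq_ofReal ν k hνν]
    push_cast
    ring
  rw [show (((L : ℝ) : ℂ) / ((k^2 : ℝ) : ℂ)) = (((L / k^2 : ℝ)) : ℂ) by push_cast; ring] at hdiv
  have hre : Tendsto (fun M : ℕ => ∑ m ∈ Finset.range M, qaux k m) atTop (𝓝 (L / k^2)) := by
    rw [← Filter.tendsto_ofReal_iff]
    exact hdiv.congr (fun M => heq M)
  exact (hasSum_iff_tendsto_nat_of_nonneg (qaux_nonneg hk) _).mpr hre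

theorem double_layer_kernel_diagonal_limit (k : ℝ) (hk : 1/2 < k) :
    let ν : ℂ := (-1 + Complex.I * Real.sqrt (4*k^2 - 1)) / 2
    let Ck : ℂ := -1 / (4 * Complex.sin (ν * Real.pi))
    Tendsto
      (fun z : ℝ => (ν + 1) * (legendreP (ν + 1) (-(z : ℂ)) + (z : ℂ) * legendreP ν (-(z : ℂ))))
      (nhdsWithin 1 (Set.Iio 1))
      (nhds (-(2 / (Real.pi : ℂ)) * Complex.sin (ν * Real.pi))) ∧
    -(2 / (Real.pi : ℂ)) * Complex.sin (ν * Real.pi)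
      = (2 / (Real.pi : ℂ)) * ((Real.cosh (Real.pi/2 * Real.sqrt (4*k^2 - 1)) : ℝ) : ℂ) ∧
    Tendsto
      (fun θ : ℝ => Ck * (ν + 1) *
        (legendreP (ν + 1) (-(Real.cos θ) : ℂ) + ((Real.cos θ : ℝ) : ℂ) * legendreP ν (-(Real.cos θ) : ℂ)))
      (nhdsWithin 0 (Set.Ioi 0))
      (nhds ((1 / (2 * Real.pi) : ℝ) : ℂ)) := by
  intro ν Ck
  set t : ℝ := Real.sqrt (4*k^2 - 1) with ht_def
  have hk0 : (0:ℝ) < k := lt_trans (by norm_num) hk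
  have ht4 : (0:ℝ) < 4*k^2 - 1 := by nlinarith
  have ht : 0 < t := Real.sqrt_pos.mpr ht4
  have ht2 : t^2 = 4*k^2 - 1 := Real.sq_sqrt ht4.le
  have hν : ν = (-1 + Complex.I * (t : ℝ)) / 2 := rfl
  have h2c : ((t:ℝ):ℂ)^2 = 4*((k:ℝ):ℂ)^2 - 1 := by exact_mod_cast ht2
  have hνν : ν * (ν + 1) = -((k^2 : ℝ) : ℂ) := by
    rw [hν]; push_cast
    linear_combination (((t:ℝ):ℂ)^2/4) * Complex.I_sq - (1/4 : ℂ) * h2c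
  have him : ν.im = t/2 := by
    rw [hν]
    simp [Complex.div_im, Complex.add_im, Complex.mul_im]
  have hν1 : ν + 1 ≠ 0 := by
    intro h
    have := congrArg Complex.im h
    simp [Complex.add_im, him] at this
    linarith
  have hne : ∀ m : ℕ, -ν ≠ -(m : ℂ) := by
    intro m h
    have := congrArg Complex.im h
    simp [Complex.neg_im, him] at this
    linarith
  have hne2 : ∀ m : ℕ, ν + 1 ≠ -(m : ℂ) := by
    intro m h
    have := congrArg Complex.im h
    simp [Complex.add_im, Complex.neg_im, him] at this
    linarith
  have hsin : Complex.sin (ν * (Real.pi : ℂ)) = -((Real.cosh (Real.pi/2 * t) : ℝ) : ℂ) := by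
    rw [hν]; exact sin_nu_pi_eval t
  have hcosh_pos : 0 < Real.cosh (Real.pi/2 * t) := Real.cosh_pos _
  have hπ : (Real.pi : ℝ) ≠ 0 := Real.pi_ne_zero
  have hπc : ((Real.pi : ℝ) : ℂ) ≠ 0 := Complex.ofReal_ne_zero.mpr hπ
  have hsin_ne : Complex.sin (ν * (Real.pi : ℂ)) ≠ 0 := by
    rw [hsin]
    simp only [ne_eq, neg_eq_zero, Complex.ofReal_eq_zero]
    exact ne_of_gt hcosh_pos
  -- the middle conjunct
  have hmid : -(2 / (Real.pi : ℂ)) * Complex.sin (ν * (Real.pi : ℂ))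
      = (2 / (Real.pi : ℂ)) * ((Real.cosh (Real.pi/2 * t) : ℝ) : ℂ) := by
    rw [hsin]; ring
  -- HasSum of qaux
  have hL : Complex.sin ((Real.pi : ℂ) * -ν) / (Real.pi : ℂ)
      = ((Real.cosh (Real.pi/2*t)/Real.pi : ℝ) : ℂ) := by
    rw [show ((Real.pi : ℂ) * -ν) = -(ν * (Real.pi : ℂ)) by ring, Complex.sin_neg, hsin]
    push_cast
    ring
  have hq : HasSum (qaux k) ((Real.cosh (Real.pi/2*t)/Real.pi) / k^2) :=
    hasSum_qaux k t _ ν hk0 hνν hne hne2 hL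
  set g : ℕ → ℂ := fun m => ((2*k^2*qaux k m : ℝ) : ℂ) with hg_def
  have coeff_eq : ∀ m : ℕ, -2 * ν * (ν + 1) * PPaux ν m
      / (((m+1).factorial : ℂ) * (m.factorial : ℂ)) = g m := by
    intro m
    rw [PP_eq_ofReal ν k hνν, hg_def]
    have h2 : -2*ν*(ν+1) = 2*((k:ℝ):ℂ)^2 := by
      have h' := hνν
      push_cast at h'
      linear_combination (-2:ℂ)*h'
    simp only [qaux]
    push_cast
    linear_combination (((paux k m : ℝ):ℂ) / ((((m+1).factorial : ℕ):ℂ)*(((m.factorial : ℕ)):ℂ))) * h2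
  have hbound_sum : Summable (fun m => 2*k^2 * qaux k m) := hq.summable.mul_left (2*k^2)
  have hg_hasSum : HasSum g ((2*Real.cosh (Real.pi/2*t)/Real.pi : ℝ) : ℂ) := by
    have h1 : HasSum (fun m => ((2*k^2*qaux k m : ℝ) : ℂ))
        ((2*k^2 * ((Real.cosh (Real.pi/2*t)/Real.pi) / k^2) : ℝ) : ℂ) :=
      Complex.hasSum_ofReal.mpr (hq.mul_left (2*k^2))
    convert h1 using 2
    field_simp
  -- part 1
  have hIoo : Set.Ioo (-1 : ℝ) 1 ∈ 𝓝[<] (1:ℝ) :=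
    Ioo_mem_nhdsLT_of_mem (by norm_num : (1:ℝ) ∈ Set.Ioc (-1:ℝ) 1)
  have hpt : ∀ m : ℕ, Tendsto (fun z : ℝ => g m * (((1+z)/2 : ℝ) : ℂ)^(m+1))
      (𝓝[<] (1:ℝ)) (𝓝 (g m)) := by
    intro m
    have hc : Continuous (fun z : ℝ => g m * (((1+z)/2 : ℝ) : ℂ)^(m+1)) := by
      continuity
    refine Tendsto.mono_left ?_ (nhdsWithin_le_nhds (s := Set.Iio (1:ℝ)))
    have := hc.tendsto (1:ℝ)
    simpa using this
  have hbd : ∀ᶠ z in 𝓝[<] (1:ℝ), ∀ m : ℕ,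
      ‖g m * (((1+z)/2 : ℝ) : ℂ)^(m+1)‖ ≤ 2*k^2 * qaux k m := by
    filter_upwards [hIoo] with z hz m
    have hq0 : 0 ≤ qaux k m := qaux_nonneg hk0 m
    have hx1 : |(1+z)/2| ≤ 1 := by
      rw [abs_le]; constructor <;> [linarith [hz.1]; linarith [hz.2]]
    rw [norm_mul, norm_pow, Complex.norm_real, Complex.norm_real]
    have h1 : ‖(2*k^2*qaux k m : ℝ)‖ = 2*k^2*qaux k m := by
      rw [Real.norm_eq_abs, abs_of_nonneg (by positivity)]
    rw [h1, Real.norm_eq_abs]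
    have h2 : |(1+z)/2|^(m+1) ≤ 1 := pow_le_one₀ (abs_nonneg _) hx1
    nlinarith [mul_le_mul_of_nonneg_left h2 (show (0:ℝ) ≤ 2*k^2*qaux k m by positivity)]
  have htsum := tendsto_tsum_of_dominated_convergence hbound_sum hpt hbd
  have hev : (fun z : ℝ => (ν + 1) * (legendreP (ν + 1) (-(z : ℂ)) + (z : ℂ) * legendreP ν (-(z : ℂ))))
      =ᶠ[𝓝[<] (1:ℝ)] (fun z : ℝ => ∑' m, g m * (((1+z)/2 : ℝ) : ℂ)^(m+1)) := by
    filter_upwards [hIoo] with z hz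
    set x : ℂ := (((1+z)/2 : ℝ) : ℂ) with hx_def
    have hx : ‖x‖ < 1 := by
      rw [hx_def, Complex.norm_real, Real.norm_eq_abs, abs_lt]
      constructor <;> [linarith [hz.1]; linarith [hz.2]]
    have hmain := hasSum_main ν hν1 x hx
    have hfun : (fun m : ℕ => -2 * ν * (ν + 1) * PPaux ν m
        / (((m+1).factorial : ℂ) * (m.factorial : ℂ)) * x^(m+1))
        = (fun m : ℕ => g m * x^(m+1)) := by
      funext m; rw [coeff_eq]
    rw [hfun] at hmain
    have hleg : ∀ μ : ℂ, legendreP μ (-(z:ℂ)) = Sser μ x := by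
      intro μ
      have h0 : legendreP μ (-(z:ℂ)) = Sser μ ((1 - (-(z:ℂ)))/2) := rfl
      rw [h0, show (1 - (-(z:ℂ)))/2 = x from by rw [hx_def]; push_cast; ring]
    have hz2 : (z:ℂ) = 2*x - 1 := by rw [hx_def]; push_cast; ring
    rw [hleg, hleg, hz2, ← hmain.tsum_eq]
  have htgt : (∑' m, g m) = -(2 / (Real.pi : ℂ)) * Complex.sin (ν * (Real.pi : ℂ)) := by
    rw [hg_hasSum.tsum_eq, hsin]
    push_cast
    ring
  have hpart1 : Tendsto
      (fun z : ℝ => (ν + 1) * (legendreP (ν + 1) (-(z : ℂ)) + (z : ℂ) * legendreP ν (-(z : ℂ))))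
      (𝓝[<] (1:ℝ)) (𝓝 (-(2 / (Real.pi : ℂ)) * Complex.sin (ν * (Real.pi : ℂ)))) := by
    rw [← htgt]
    exact Tendsto.congr' hev.symm htsum
  refine ⟨hpart1, hmid, ?_⟩
  -- part 3
  have hcos : Tendsto Real.cos (𝓝[>] (0:ℝ)) (𝓝[<] (1:ℝ)) := by
    apply tendsto_nhdsWithin_of_tendsto_nhds_of_eventually_within
    · have := (Real.continuous_cos.tendsto 0).mono_left (nhdsWithin_le_nhds (s := Set.Ioi (0:ℝ)))
      simpa using this
    · filter_upwards [Ioo_mem_nhdsGT_of_mem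
        (Set.mem_Ico.mpr ⟨le_refl (0:ℝ), Real.pi_pos⟩)] with θ hθ
      have h1 : Real.cos θ ≤ 1 := Real.cos_le_one θ
      rcases lt_or_eq_of_le h1 with h | h
      · exact h
      · exfalso
        have h2π : θ < 2*Real.pi := lt_trans hθ.2 (by linarith [Real.pi_pos])
        have := (Real.cos_eq_one_iff_of_lt_of_lt (by linarith [Real.pi_pos, hθ.1]) h2π).mp h
        exact (ne_of_gt hθ.1) this
  have h3 := (hpart1.comp hcos).const_mul Ck
  have hCk : Ck = -1 / (4 * Complex.sin (ν * (Real.pi : ℂ))) := rfl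
  have hval : Ck * (-(2 / (Real.pi : ℂ)) * Complex.sin (ν * (Real.pi : ℂ)))
      = ((1 / (2 * Real.pi) : ℝ) : ℂ) := by
    rw [hCk]
    field_simp
    push_cast
    field_simp
    norm_num
  rw [hval] at h3
  convert h3 using 2 with θ
  simp only [Function.comp]
  ring
end

section
/- Let γ : ℝ → ℝ³ be a twice continuously differentiable curve lying on the unit sphere (‖γ(s)‖ = 1 for all s) and parametrized by arc length (‖γ′(s)‖ = 1 for all s). Then lim_{s→0, s≠0} ⟨γ(0) − γ(s), γ′(s) × γ(s)⟩ / ‖γ(0) − γ(s)‖² = −(1/2)·⟨γ′(0), γ″(0) × γ(0)⟩. (Here γ″(0) = κ·n_p with κ the curvature and n_p the principal normal of γ at γ(0).) -/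
open Filter Topology

/-- The cross product on `EuclideanSpace ℝ (Fin 3)`. -/
noncomputable def cross3 (u v : EuclideanSpace ℝ (Fin 3)) : EuclideanSpace ℝ (Fin 3) :=
  (EuclideanSpace.equiv (Fin 3) ℝ).symm
    ![u 1 * v 2 - u 2 * v 1, u 2 * v 0 - u 0 * v 2, u 0 * v 1 - u 1 * v 0]

theorem double_layer_geometric_limit
    (γ : ℝ → EuclideanSpace ℝ (Fin 3))
    (hγ : ContDiff ℝ 2 γ)
    (hsphere : ∀ s : ℝ, ‖γ s‖ = 1)
    (harc : ∀ s : ℝ, ‖deriv γ s‖ = 1) :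
    Tendsto
      (fun s : ℝ =>
        (inner ℝ (γ 0 - γ s) (cross3 (deriv γ s) (γ s)) : ℝ) / ‖γ 0 - γ s‖^2)
      (nhdsWithin 0 {(0 : ℝ)}ᶜ)
      (nhds (-(1/2) * (inner ℝ (deriv γ 0) (cross3 (deriv (deriv γ) 0) (γ 0)) : ℝ))) := by
  -- basic regularity
  rw [(by norm_num : (2 : WithTop ℕ∞) = 1 + 1), contDiff_succ_iff_deriv] at hγ
  obtain ⟨hdiff, -, hd1⟩ := hγ
  have hdiff2 : Differentiable ℝ (deriv γ) := hd1.differentiable one_ne_zero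
  have hcont2 : Continuous (deriv (deriv γ)) := (contDiff_one_iff_deriv.mp hd1).2
  have hcont1 : Continuous (deriv γ) := hdiff2.continuous
  have hcont0 : Continuous γ := hdiff.continuous
  -- componentwise derivatives
  have hqd : ∀ (s : ℝ) (i : Fin 3), HasDerivAt (fun t => γ t i) (deriv γ s i) s := fun s i =>
    ((EuclideanSpace.proj i).hasFDerivAt.comp_hasDerivAt s (hdiff s).hasDerivAt : )
  have hpd : ∀ (s : ℝ) (i : Fin 3), HasDerivAt (fun t => deriv γ t i) (deriv (deriv γ) s i) s :=
    fun s i => ((EuclideanSpace.proj i).hasFDerivAt.comp_hasDerivAt s (hdiff2 s).hasDerivAt : )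
  have hqc : ∀ i : Fin 3, Continuous (fun t => γ t i) := fun i =>
    (EuclideanSpace.proj i).continuous.comp hcont0
  have hpc : ∀ i : Fin 3, Continuous (fun t => deriv γ t i) := fun i =>
    (EuclideanSpace.proj i).continuous.comp hcont1
  have hrc : ∀ i : Fin 3, Continuous (fun t => deriv (deriv γ) t i) := fun i =>
    (EuclideanSpace.proj i).continuous.comp hcont2
  -- slope components
  have hσ : ∀ i : Fin 3,
      Tendsto (fun s : ℝ => s⁻¹ * (γ s i - γ 0 i)) (𝓝[≠] 0) (𝓝 (deriv γ 0 i)) := by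
    intro i
    have h1 := hasDerivAt_iff_tendsto_slope.mp (hqd 0 i)
    refine h1.congr fun s => ?_
    rw [slope_def_field]
    simp [div_eq_inv_mul]
  -- the numerator (modulo the vanishing ⟨γ s, γ' s × γ s⟩ part)
  set F : ℝ → ℝ := fun s =>
    γ 0 0 * (deriv γ s 1 * γ s 2 - deriv γ s 2 * γ s 1) +
    γ 0 1 * (deriv γ s 2 * γ s 0 - deriv γ s 0 * γ s 2) +
    γ 0 2 * (deriv γ s 0 * γ s 1 - deriv γ s 1 * γ s 0) with hFdef
  set D : ℝ → ℝ := fun s =>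
    γ 0 0 * (deriv (deriv γ) s 1 * γ s 2 - deriv (deriv γ) s 2 * γ s 1) +
    γ 0 1 * (deriv (deriv γ) s 2 * γ s 0 - deriv (deriv γ) s 0 * γ s 2) +
    γ 0 2 * (deriv (deriv γ) s 0 * γ s 1 - deriv (deriv γ) s 1 * γ s 0) with hDdef
  have hF : ∀ s, HasDerivAt F (D s) s := by
    intro s
    have h0 := (((hpd s 1).mul (hqd s 2)).sub ((hpd s 2).mul (hqd s 1))).const_mul (γ 0 0)
    have h1 := (((hpd s 2).mul (hqd s 0)).sub ((hpd s 0).mul (hqd s 2))).const_mul (γ 0 1)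
    have h2 := (((hpd s 0).mul (hqd s 1)).sub ((hpd s 1).mul (hqd s 0))).const_mul (γ 0 2)
    have := (h0.add h1).add h2
    refine this.congr_deriv ?_
    simp only [hDdef]
    ring
  -- F tends to 0
  have hF0 : Tendsto F (𝓝[≠] 0) (𝓝 0) := by
    have hc : Continuous F :=
      ((continuous_const.mul (((hpc 1).mul (hqc 2)).sub ((hpc 2).mul (hqc 1)))).add
        (continuous_const.mul (((hpc 2).mul (hqc 0)).sub ((hpc 0).mul (hqc 2))))).add
        (continuous_const.mul (((hpc 0).mul (hqc 1)).sub ((hpc 1).mul (hqc 0))))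
    have : F 0 = 0 := by simp only [hFdef]; ring
    simpa [this] using (hc.tendsto 0).mono_left nhdsWithin_le_nhds
  -- limit of D s / (2 s)
  have hDlim : Tendsto (fun s => D s / (2 * s)) (𝓝[≠] 0)
      (𝓝 (-(1/2) * (inner ℝ (deriv γ 0) (cross3 (deriv (deriv γ) 0) (γ 0)) : ℝ))) := by
    have key : Tendsto (fun s : ℝ => (1/2) *
        (γ 0 0 * (deriv (deriv γ) s 1 * (s⁻¹ * (γ s 2 - γ 0 2)) -
                  deriv (deriv γ) s 2 * (s⁻¹ * (γ s 1 - γ 0 1))) +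
         γ 0 1 * (deriv (deriv γ) s 2 * (s⁻¹ * (γ s 0 - γ 0 0)) -
                  deriv (deriv γ) s 0 * (s⁻¹ * (γ s 2 - γ 0 2))) +
         γ 0 2 * (deriv (deriv γ) s 0 * (s⁻¹ * (γ s 1 - γ 0 1)) -
                  deriv (deriv γ) s 1 * (s⁻¹ * (γ s 0 - γ 0 0))))) (𝓝[≠] 0)
        (𝓝 ((1/2) *
        (γ 0 0 * (deriv (deriv γ) 0 1 * deriv γ 0 2 - deriv (deriv γ) 0 2 * deriv γ 0 1) +
         γ 0 1 * (deriv (deriv γ) 0 2 * deriv γ 0 0 - deriv (deriv γ) 0 0 * deriv γ 0 2) +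
         γ 0 2 * (deriv (deriv γ) 0 0 * deriv γ 0 1 - deriv (deriv γ) 0 1 * deriv γ 0 0)))) := by
      have hr : ∀ i : Fin 3, Tendsto (fun s => deriv (deriv γ) s i) (𝓝[≠] 0)
          (𝓝 (deriv (deriv γ) 0 i)) := fun i =>
        ((hrc i).tendsto 0).mono_left nhdsWithin_le_nhds
      exact tendsto_const_nhds.mul
        ((((((hr 1).mul (hσ 2)).sub ((hr 2).mul (hσ 1))).const_mul (γ 0 0)).add
          (((((hr 2).mul (hσ 0)).sub ((hr 0).mul (hσ 2))).const_mul (γ 0 1)))).add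
          (((((hr 0).mul (hσ 1)).sub ((hr 1).mul (hσ 0))).const_mul (γ 0 2))))
    have heq : ∀ᶠ s in 𝓝[≠] (0:ℝ), (1/2) *
        (γ 0 0 * (deriv (deriv γ) s 1 * (s⁻¹ * (γ s 2 - γ 0 2)) -
                  deriv (deriv γ) s 2 * (s⁻¹ * (γ s 1 - γ 0 1))) +
         γ 0 1 * (deriv (deriv γ) s 2 * (s⁻¹ * (γ s 0 - γ 0 0)) -
                  deriv (deriv γ) s 0 * (s⁻¹ * (γ s 2 - γ 0 2))) +
         γ 0 2 * (deriv (deriv γ) s 0 * (s⁻¹ * (γ s 1 - γ 0 1)) -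
                  deriv (deriv γ) s 1 * (s⁻¹ * (γ s 0 - γ 0 0)))) = D s / (2 * s) := by
      filter_upwards [self_mem_nhdsWithin] with s hs
      have hs' : s ≠ 0 := hs
      simp only [hDdef]
      field_simp
      ring
    have hval : (1/2 : ℝ) *
        (γ 0 0 * (deriv (deriv γ) 0 1 * deriv γ 0 2 - deriv (deriv γ) 0 2 * deriv γ 0 1) +
         γ 0 1 * (deriv (deriv γ) 0 2 * deriv γ 0 0 - deriv (deriv γ) 0 0 * deriv γ 0 2) +
         γ 0 2 * (deriv (deriv γ) 0 0 * deriv γ 0 1 - deriv (deriv γ) 0 1 * deriv γ 0 0)) =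
        -(1/2) * (inner ℝ (deriv γ 0) (cross3 (deriv (deriv γ) 0) (γ 0)) : ℝ) := by
      simp only [PiLp.inner_apply, RCLike.inner_apply, conj_trivial, Fin.sum_univ_three]
      show _ = -(1/2) * (
          (deriv (deriv γ) 0 1 * γ 0 2 - deriv (deriv γ) 0 2 * γ 0 1) * deriv γ 0 0 +
        (deriv (deriv γ) 0 2 * γ 0 0 - deriv (deriv γ) 0 0 * γ 0 2) * deriv γ 0 1 +
        (deriv (deriv γ) 0 0 * γ 0 1 - deriv (deriv γ) 0 1 * γ 0 0) * deriv γ 0 2)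
      ring
    rw [hval] at key
    exact key.congr' heq
  -- L'Hôpital: F s / s ^ 2 tends to the limit
  have hFs : Tendsto (fun s => F s / s ^ 2) (𝓝[≠] 0)
      (𝓝 (-(1/2) * (inner ℝ (deriv γ 0) (cross3 (deriv (deriv γ) 0) (γ 0)) : ℝ))) := by
    apply HasDerivAt.lhopital_zero_nhdsNE (f' := D) (g' := fun s => 2 * s)
    · exact Eventually.of_forall fun s => hF s
    · exact Eventually.of_forall fun s => by
        simpa [mul_comm] using ((hasDerivAt_pow 2 s) : HasDerivAt (fun x : ℝ => x ^ 2) _ s)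
    · filter_upwards [self_mem_nhdsWithin] with s hs
      exact mul_ne_zero two_ne_zero hs
    · exact hF0
    · exact Tendsto.mono_left (by simpa using (continuous_pow 2).tendsto (0:ℝ)) nhdsWithin_le_nhds
    · exact hDlim
  -- denominator: ‖γ 0 - γ s‖ ^ 2 / s ^ 2 → 1
  have hQ : Tendsto (fun s => ‖γ 0 - γ s‖ ^ 2 / s ^ 2) (𝓝[≠] (0:ℝ)) (𝓝 1) := by
    have h1 := hasDerivAt_iff_tendsto_slope.mp (hdiff 0).hasDerivAt
    have h2 : Tendsto (fun s => ‖slope γ 0 s‖ ^ 2) (𝓝[≠] (0:ℝ)) (𝓝 (‖deriv γ 0‖ ^ 2)) :=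
      ((continuous_norm.tendsto _).comp h1).pow 2
    rw [harc 0, one_pow] at h2
    refine h2.congr fun s => ?_
    rw [slope_fun_def]
    simp only [vsub_eq_sub, sub_zero, norm_smul, norm_inv, Real.norm_eq_abs, mul_pow,
      ← norm_sub_rev (γ s)]
    rw [inv_pow, sq_abs, div_eq_mul_inv, mul_comm]
  -- combine
  have hcomb := hFs.div hQ one_ne_zero
  rw [div_one] at hcomb
  refine hcomb.congr' ?_
  filter_upwards [self_mem_nhdsWithin] with s hs
  have hs' : (s:ℝ) ≠ 0 := hs
  have hnum : (inner ℝ (γ 0 - γ s) (cross3 (deriv γ s) (γ s)) : ℝ) = F s := by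
    simp only [PiLp.inner_apply, RCLike.inner_apply, conj_trivial, Fin.sum_univ_three,
      PiLp.sub_apply]
    show (deriv γ s 1 * γ s 2 - deriv γ s 2 * γ s 1) * (γ 0 0 - γ s 0) +
      (deriv γ s 2 * γ s 0 - deriv γ s 0 * γ s 2) * (γ 0 1 - γ s 1) +
      (deriv γ s 0 * γ s 1 - deriv γ s 1 * γ s 0) * (γ 0 2 - γ s 2) = F s
    simp only [hFdef]
    ring
  simp only [Pi.div_apply]
  rw [div_div_div_comm, div_self (pow_ne_zero 2 hs'), div_one, hnum]
end

section
/- Let k > 1/2 be real, ν := (−1 + i·√(4k² − 1))/2 and C_k := −1/(4·sin(νπ)). Let γ : ℝ → ℝ³ be a twice continuously differentiable curve lying on the unit sphere (‖γ(s)‖ = 1 for all s) and parametrized by arc length (‖γ′(s)‖ = 1 for all s). For s ≠ 0 near 0 (so that 0 < ‖γ(0) − γ(s)‖ < 2), define the double-layer kernel f(s) := −C_k · P_ν′( ‖γ(0) − γ(s)‖²/2 − 1 ) · ⟨γ(0) − γ(s), γ′(s) × γ(s)⟩, where P_ν′ is the derivative of P_ν on the real interval (−1, 3). Then lim_{s→0,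 s≠0} f(s) = −(1/(4π)) · ⟨γ′(0), γ″(0) × γ(0)⟩; i.e., the kernel of the Yukawa–Beltrami double-layer operator extends continuously across the diagonal, with value −(κ/(4π))·⟨t, n_p × x₀⟩ where κ is the curvature, n_p the principal normal, t = γ′(0) the tangent and x₀ = γ(0). -/
open Polynomial Filter Topology

open Finset

noncomputable def lc (ν : ℂ) (n : ℕ) : ℂ :=
  ((ascPochhammer ℂ n).eval (-ν) * (ascPochhammer ℂ n).eval (ν + 1)) / ((n.factorial : ℂ))^2

lemma asc_eval_prod (x : ℂ) (n : ℕ) :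
    (ascPochhammer ℂ n).eval x = ∏ j ∈ range n, (x + j) := by
  induction n with
  | zero => simp
  | succ n ih => rw [ascPochhammer_succ_eval, ih, prod_range_succ]

lemma ne_zero_of_im (z : ℂ) (h : z.im ≠ 0) : z ≠ 0 := fun h0 => h (by simp [h0])

variable {ν : ℂ} (hν : ν.im ≠ 0)

include hν in
lemma key_identity (n : ℕ) (hn : n ≠ 0) :
    (n : ℂ) * lc ν n =
      (n : ℂ)^2 / (((n : ℂ) - ν) * ((n : ℂ) + ν + 1)
        * (Complex.GammaSeq (-ν) n * Complex.GammaSeq (ν + 1) n)) := by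
  have hn0 : (n : ℂ) ≠ 0 := Nat.cast_ne_zero.mpr hn
  have hfac : ((n.factorial : ℂ)) ≠ 0 := Nat.cast_ne_zero.mpr n.factorial_ne_zero
  have hpow : (n : ℂ) ^ (-ν) * (n : ℂ) ^ (ν + 1) = (n : ℂ) := by
    rw [← Complex.cpow_add _ _ hn0]; ring_nf; rw [Complex.cpow_one]
  have h1 : ∀ j : ℕ, (-ν + (j:ℂ)) ≠ 0 := fun j => ne_zero_of_im _ (by simp [hν])
  have h2 : ∀ j : ℕ, (ν + 1 + (j:ℂ)) ≠ 0 := fun j => ne_zero_of_im _ (by simp [hν])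
  have hQ1 : ∏ j ∈ range n, (-ν + (j:ℂ)) ≠ 0 := prod_ne_zero_iff.mpr fun j _ => h1 j
  have hQ2 : ∏ j ∈ range n, (ν + 1 + (j:ℂ)) ≠ 0 := prod_ne_zero_iff.mpr fun j _ => h2 j
  have hnν : ((n:ℂ) - ν) ≠ 0 := ne_zero_of_im _ (by simp [hν])
  have hnν1 : ((n:ℂ) + ν + 1) ≠ 0 := ne_zero_of_im _ (by simp [hν])
  have hGS : Complex.GammaSeq (-ν) n * Complex.GammaSeq (ν + 1) n =
      ((n:ℂ) * (n.factorial : ℂ)^2) /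
        (((∏ j ∈ range n, (-ν + (j:ℂ))) * ((n:ℂ) - ν))
          * ((∏ j ∈ range n, (ν + 1 + (j:ℂ))) * ((n:ℂ) + ν + 1))) := by
    rw [Complex.GammaSeq, Complex.GammaSeq, prod_range_succ, prod_range_succ,
      div_mul_div_comm]
    rw [show (-ν + (n:ℂ)) = ((n:ℂ) - ν) by ring, show (ν + 1 + (n:ℂ)) = ((n:ℂ) + ν + 1) by ring]
    rw [show (n:ℂ) ^ (-ν) * ↑n.factorial * ((n:ℂ) ^ (ν + 1) * ↑n.factorial)
        = ((n:ℂ) ^ (-ν) * (n:ℂ) ^ (ν + 1)) * (↑n.factorial * ↑n.factorial) by ring, hpow]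
    ring
  rw [hGS, lc, asc_eval_prod, asc_eval_prod]
  field_simp

noncomputable def Lν (ν : ℂ) : ℂ := 1 / (Complex.Gamma (-ν) * Complex.Gamma (ν + 1))

include hν in
lemma tendsto_n_lc : Tendsto (fun n : ℕ => (n : ℂ) * lc ν n) atTop (𝓝 (Lν ν)) := by
  have hG1 : Complex.Gamma (-ν) ≠ 0 :=
    Complex.Gamma_ne_zero fun m => fun h => hν (by simpa using congrArg Complex.im h)
  have hG2 : Complex.Gamma (ν + 1) ≠ 0 :=
    Complex.Gamma_ne_zero fun m => fun h => hν (by simpa using congrArg Complex.im h)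
  have hinv : Tendsto (fun n : ℕ => ((n : ℂ))⁻¹) atTop (𝓝 0) := by
    rw [tendsto_zero_iff_norm_tendsto_zero]
    simp only [norm_inv, Complex.norm_natCast]
    exact tendsto_inv_atTop_zero.comp tendsto_natCast_atTop_atTop
  have hq : Tendsto (fun n : ℕ => (n : ℂ)^2 / (((n : ℂ) - ν) * ((n : ℂ) + ν + 1)))
      atTop (𝓝 1) := by
    have h1 := ((tendsto_const_nhds : Tendsto (fun _ : ℕ => (1:ℂ)) atTop (𝓝 1)).sub
        (hinv.const_mul ν)).mul
      ((tendsto_const_nhds : Tendsto (fun _ : ℕ => (1:ℂ)) atTop (𝓝 1)).add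
        (hinv.const_mul (ν+1)))
    simp only [mul_zero, sub_zero, add_zero, one_mul] at h1
    have h2 := h1.inv₀ one_ne_zero
    rw [inv_one] at h2
    apply h2.congr'
    filter_upwards [eventually_ne_atTop 0] with n hn
    have hn0 : (n : ℂ) ≠ 0 := Nat.cast_ne_zero.mpr hn
    have hnν : ((n:ℂ) - ν) ≠ 0 := ne_zero_of_im _ (by simp [hν])
    have hnν1 : ((n:ℂ) + ν + 1) ≠ 0 := ne_zero_of_im _ (by simp [hν])
    have e1 : (1 - ν * ((n:ℂ))⁻¹) = ((n:ℂ) - ν)/n := by field_simp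
    have e2 : (1 + (ν + 1) * ((n:ℂ))⁻¹) = ((n:ℂ) + ν + 1)/n := by field_simp; ring
    rw [e1, e2, div_mul_div_comm, inv_div]
    rw [show (n:ℂ) * n = (n:ℂ)^2 by ring]
  have hmain : Tendsto (fun n : ℕ => (n : ℂ)^2 / (((n : ℂ) - ν) * ((n : ℂ) + ν + 1)
        * (Complex.GammaSeq (-ν) n * Complex.GammaSeq (ν + 1) n)))
      atTop (𝓝 (Lν ν)) := by
    have := hq.div ((Complex.GammaSeq_tendsto_Gamma (-ν)).mul
      (Complex.GammaSeq_tendsto_Gamma (ν + 1))) (mul_ne_zero hG1 hG2)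
    exact this.congr fun n => by simp only [Pi.div_apply]; rw [div_div]
  apply hmain.congr'
  filter_upwards [eventually_ne_atTop 0] with n hn
  exact (key_identity hν n hn).symm

include hν in
lemma sin_nu_pi_ne_zero : Complex.sin (ν * Real.pi) ≠ 0 := by
  rw [Complex.sin_ne_zero_iff]
  intro m hm
  apply hν
  have := congrArg Complex.im hm
  simp [Complex.mul_im] at this
  exact this

include hν in
lemma Lν_eq : Lν ν = -Complex.sin (ν * Real.pi) / Real.pi := by
  have h := Complex.Gamma_mul_Gamma_one_sub (ν + 1)
  rw [show (1 : ℂ) - (ν + 1) = -ν by ring] at h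
  have hs : Complex.sin (↑Real.pi * (ν + 1)) = -Complex.sin (ν * Real.pi) := by
    rw [show (↑Real.pi : ℂ) * (ν + 1) = ν * Real.pi + Real.pi by ring, Complex.sin_add]
    simp [← Complex.ofReal_sin, ← Complex.ofReal_cos, Real.sin_pi, Real.cos_pi]
  rw [hs] at h
  have hsin := sin_nu_pi_ne_zero hν
  have hpi : (Real.pi : ℂ) ≠ 0 := Complex.ofReal_ne_zero.mpr Real.pi_ne_zero
  rw [Lν, mul_comm (Complex.Gamma (-ν)), h, one_div_div]

lemma norm_half_sub (y : ℝ) : ‖(1 - (y:ℂ))/2‖ = |1 - y|/2 := by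
  rw [show (1 - (y:ℂ))/2 = (((1 - y)/2 : ℝ) : ℂ) by push_cast; ring,
    Complex.norm_real, Real.norm_eq_abs, abs_div, abs_two]

include hν in
lemma exists_bound : ∃ M : ℝ, 0 ≤ M ∧ (∀ n : ℕ, ‖(n:ℂ) * lc ν n‖ ≤ M)
    ∧ (∀ n : ℕ, ‖lc ν n‖ ≤ M) := by
  obtain ⟨M0, hM0⟩ := (tendsto_n_lc hν).norm.bddAbove_range
  refine ⟨max M0 1, le_trans zero_le_one (le_max_right _ _), fun n => le_trans (hM0 ⟨n, rfl⟩)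
    (le_max_left _ _), fun n => ?_⟩
  match n with
  | 0 => simpa [lc] using le_max_right M0 1
  | (m+1) =>
    have h := hM0 ⟨m+1, rfl⟩
    simp only [norm_mul, Complex.norm_natCast] at h
    refine le_trans (le_trans ?_ h) (le_max_left _ _)
    have h1 : (1:ℝ) ≤ ((m+1 : ℕ) : ℝ) := by exact_mod_cast Nat.succ_le_succ (Nat.zero_le m)
    nlinarith [norm_nonneg (lc ν (m+1))]

lemma summable_geom_shift {r : ℝ} (h0 : 0 ≤ r) (h1 : r < 1) :
    Summable (fun n : ℕ => r^(n-1)) := by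
  rw [← summable_nat_add_iff 1]
  simpa using summable_geometric_of_lt_one h0 h1

include hν in
lemma hasDerivAt_legendreP {x : ℝ} (hx : |1 - x| < 2) :
    HasDerivAt (fun x : ℝ => legendreP ν x)
      (∑' n : ℕ, lc ν n * (n:ℂ) * ((1 - (x:ℂ))/2)^(n-1) * (-(1/2:ℂ))) x := by
  obtain ⟨M, hM0, hM1, hM2⟩ := exists_bound hν
  set r : ℝ := (|1 - x|/2 + 1)/2 with hrdef
  have habs : 0 ≤ |1 - x| := abs_nonneg _
  have hr0 : 0 < r := by positivity
  have hr1 : r < 1 := by simp only [hrdef]; linarith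
  have hxr : |1 - x|/2 < r := by simp only [hrdef]; linarith
  have hmem : x ∈ Set.Ioo (1 - 2*r) (1 + 2*r) := by
    rw [Set.mem_Ioo]
    constructor <;> linarith [neg_abs_le (1-x), le_abs_self (1-x)]
  have hg : ∀ (n : ℕ) (y : ℝ), y ∈ Set.Ioo (1 - 2*r) (1 + 2*r) →
      HasDerivAt (fun y : ℝ => lc ν n * ((1 - (y:ℂ))/2)^n)
      (lc ν n * (n:ℂ) * ((1 - (y:ℂ))/2)^(n-1) * (-(1/2:ℂ))) y := by
    intro n y _
    have hbase : HasDerivAt (fun z : ℂ => ((1 - z)/2)) (-(1/2:ℂ)) (y:ℂ) := by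
      exact (((hasDerivAt_id' (y:ℂ)).const_sub 1).div_const 2).congr_deriv (by norm_num)
    have hz := (hbase.pow n).const_mul (lc ν n)
    have : HasDerivAt (fun z : ℂ => lc ν n * ((1 - z)/2)^n)
        (lc ν n * (n:ℂ) * ((1 - (y:ℂ))/2)^(n-1) * (-(1/2:ℂ))) (y:ℂ) := by
      exact hz.congr_deriv (by ring)
    exact this.comp_ofReal
  have hnorm : ∀ (n : ℕ) (y : ℝ),
      ‖lc ν n * (n:ℂ) * ((1 - (y:ℂ))/2)^(n-1) * (-(1/2:ℂ))‖
        = ‖(n:ℂ) * lc ν n‖ * (|1 - y|/2)^(n-1) * (1/2) := by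
    intro n y
    have hhalf : ‖(-(1/2):ℂ)‖ = 1/2 := by norm_num
    simp only [norm_mul, norm_pow, norm_half_sub, hhalf, Complex.norm_natCast]
    ring
  have hu : Summable (fun n : ℕ => M * r^(n-1) * (1/2)) :=
    ((summable_geom_shift hr0.le hr1).mul_left M).mul_right (1/2)
  have hg' : ∀ (n : ℕ), ∀ y ∈ Set.Ioo (1 - 2*r) (1 + 2*r),
      ‖lc ν n * (n:ℂ) * ((1 - (y:ℂ))/2)^(n-1) * (-(1/2:ℂ))‖ ≤ M * r^(n-1) * (1/2) := by
    intro n y hy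
    rw [hnorm n y]
    have hy' : |1 - y|/2 < r := by
      rw [Set.mem_Ioo] at hy
      rw [div_lt_iff₀ (by norm_num : (0:ℝ) < 2), abs_lt]
      constructor <;> linarith [hy.1, hy.2]
    have h1 : (|1 - y|/2)^(n-1) ≤ r^(n-1) := pow_le_pow_left₀ (by positivity) hy'.le _
    have h2 := hM1 n
    have h3 : (0:ℝ) ≤ (|1 - y|/2)^(n-1) := by positivity
    nlinarith [norm_nonneg ((n:ℂ) * lc ν n)]
  have hg0 : Summable (fun n : ℕ => lc ν n * ((1 - (x:ℂ))/2)^n) := by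
    apply Summable.of_norm_bounded (g := fun n => M * (|1 - x|/2)^n)
      ((summable_geometric_of_lt_one (by positivity) (lt_trans hxr hr1)).mul_left M)
    intro n
    rw [norm_mul, norm_pow, norm_half_sub]
    have h3 : (0:ℝ) ≤ (|1 - x|/2)^n := by positivity
    nlinarith [norm_nonneg (lc ν n), hM2 n]
  exact hasDerivAt_tsum_of_isPreconnected hu (isOpen_Ioo (a := 1 - 2*r) (b := 1 + 2*r))
    isPreconnected_Ioo hg hg' hmem hg0 hmem

noncomputable def dcoef (ν : ℂ) (m : ℕ) : ℂ :=
  ((m+1 : ℕ):ℂ) * lc ν (m+1) - ((m : ℕ):ℂ) * lc ν m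

include hν in
lemma abel_limit :
    Tendsto (fun z : ℂ => ∑' m : ℕ, dcoef ν m * z^m) (𝓝[Complex.stolzSet 2] 1)
      (𝓝 (Lν ν)) := by
  apply Complex.tendsto_tsum_powerSeries_nhdsWithin_stolzSet
  have hsum : ∀ n : ℕ, ∑ i ∈ Finset.range n, dcoef ν i = (n:ℂ) * lc ν n := by
    intro n
    have h := Finset.sum_range_sub (f := fun k : ℕ => (k:ℂ) * lc ν k) n
    simp only [Nat.cast_zero, zero_mul, sub_zero] at h
    rw [← h]
    exact Finset.sum_congr rfl fun i _ => by simp [dcoef]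
  simp only [hsum]
  exact tendsto_n_lc hν

include hν in
lemma abel_identity {z : ℂ} (hz : ‖z‖ < 1) :
    (1 - z) * ∑' n : ℕ, (n:ℂ) * lc ν n * z^(n-1) = ∑' m : ℕ, dcoef ν m * z^m := by
  obtain ⟨M, hM0, hM1, hM2⟩ := exists_bound hν
  have hz0 : 0 ≤ ‖z‖ := norm_nonneg z
  have S1 : Summable (fun n : ℕ => (n:ℂ) * lc ν n * z^(n-1)) := by
    apply Summable.of_norm_bounded (g := fun n => M * ‖z‖^(n-1))
      ((summable_geom_shift hz0 hz).mul_left M)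
    intro n
    rw [norm_mul, norm_pow]
    have : (0:ℝ) ≤ ‖z‖^(n-1) := by positivity
    nlinarith [norm_nonneg ((n:ℂ) * lc ν n), hM1 n]
  have S2 : Summable (fun n : ℕ => (n:ℂ) * lc ν n * z^n) := by
    apply Summable.of_norm_bounded (g := fun n => M * ‖z‖^n)
      ((summable_geometric_of_lt_one hz0 hz).mul_left M)
    intro n
    rw [norm_mul, norm_pow]
    have : (0:ℝ) ≤ ‖z‖^n := by positivity
    nlinarith [norm_nonneg ((n:ℂ) * lc ν n), hM1 n]
  have S3 : Summable (fun m : ℕ => ((m+1:ℕ):ℂ) * lc ν (m+1) * z^m) := by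
    apply Summable.of_norm_bounded (g := fun n => M * ‖z‖^n)
      ((summable_geometric_of_lt_one hz0 hz).mul_left M)
    intro m
    rw [norm_mul, norm_pow]
    have : (0:ℝ) ≤ ‖z‖^m := by positivity
    nlinarith [norm_nonneg (((m+1:ℕ):ℂ) * lc ν (m+1)), hM1 (m+1)]
  have step1 : ∑' n : ℕ, (n:ℂ) * lc ν n * z^(n-1)
      = ∑' m : ℕ, ((m+1:ℕ):ℂ) * lc ν (m+1) * z^m := by
    rw [Summable.tsum_eq_zero_add S1]
    simp
  have step2 : ∑' n : ℕ, (n:ℂ) * lc ν n * z^n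
      = z * ∑' m : ℕ, ((m+1:ℕ):ℂ) * lc ν (m+1) * z^m := by
    rw [Summable.tsum_eq_zero_add S2, ← tsum_mul_left]
    simp only [Nat.cast_zero, zero_mul, pow_zero, mul_one, zero_add]
    exact tsum_congr fun m => by rw [pow_succ]; ring
  have step3 : ∑' m : ℕ, dcoef ν m * z^m
      = (∑' m : ℕ, ((m+1:ℕ):ℂ) * lc ν (m+1) * z^m) - ∑' n : ℕ, (n:ℂ) * lc ν n * z^n := by
    rw [← Summable.tsum_sub S3 S2]
    exact tsum_congr fun m => by rw [dcoef]; ring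
  rw [step1, step3, step2]
  ring

lemma inner_cross3 (x u v : EuclideanSpace ℝ (Fin 3)) :
    (inner ℝ x (cross3 u v) : ℝ) = x 0 * (u 1 * v 2 - u 2 * v 1) + x 1 * (u 2 * v 0 - u 0 * v 2)
      + x 2 * (u 0 * v 1 - u 1 * v 0) := by
  simp [cross3, PiLp.inner_apply, Fin.sum_univ_three]
  ring

section Geometry

variable {γ : ℝ → EuclideanSpace ℝ (Fin 3)}

lemma hasDerivAt_coord {f : ℝ → EuclideanSpace ℝ (Fin 3)} (hf : Differentiable ℝ f)
    (i : Fin 3) (s : ℝ) : HasDerivAt (fun s => f s i) (deriv f s i) s := by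
  have := (EuclideanSpace.proj (𝕜 := ℝ) i).hasFDerivAt.comp_hasDerivAt s (hf s).hasDerivAt
  exact this

lemma hasDerivAt_inner_cross (hd1 : Differentiable ℝ γ) (hd2 : Differentiable ℝ (deriv γ))
    (s : ℝ) :
    HasDerivAt (fun s => (inner ℝ (γ 0 - γ s) (cross3 (deriv γ s) (γ s)) : ℝ))
      (inner ℝ (γ 0 - γ s) (cross3 (deriv (deriv γ) s) (γ s)) : ℝ) s := by
  have hc : ∀ (i : Fin 3) (s : ℝ), HasDerivAt (fun s => γ s i) (deriv γ s i) s :=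
    fun i s => hasDerivAt_coord hd1 i s
  have hc2 : ∀ (i : Fin 3) (s : ℝ), HasDerivAt (fun s => deriv γ s i) (deriv (deriv γ) s i) s :=
    fun i s => hasDerivAt_coord hd2 i s
  have expand : (fun s => (inner ℝ (γ 0 - γ s) (cross3 (deriv γ s) (γ s)) : ℝ)) = fun s =>
      (γ 0 0 - γ s 0) * (deriv γ s 1 * γ s 2 - deriv γ s 2 * γ s 1)
    + ((γ 0 1 - γ s 1) * (deriv γ s 2 * γ s 0 - deriv γ s 0 * γ s 2)
    + (γ 0 2 - γ s 2) * (deriv γ s 0 * γ s 1 - deriv γ s 1 * γ s 0)) := by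
    funext t
    rw [inner_cross3]
    simp only [PiLp.sub_apply]
    ring
  rw [expand]
  have A0 := ((hc 0 s).const_sub (γ 0 0)).mul
    (((hc2 1 s).mul (hc 2 s)).sub ((hc2 2 s).mul (hc 1 s)))
  have A1 := ((hc 1 s).const_sub (γ 0 1)).mul
    (((hc2 2 s).mul (hc 0 s)).sub ((hc2 0 s).mul (hc 2 s)))
  have A2 := ((hc 2 s).const_sub (γ 0 2)).mul
    (((hc2 0 s).mul (hc 1 s)).sub ((hc2 1 s).mul (hc 0 s)))
  have H := A0.add (A1.add A2)
  refine H.congr_deriv ?_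
  rw [inner_cross3]
  simp only [PiLp.sub_apply, Pi.mul_apply, Pi.sub_apply]
  ring

lemma continuous_cross3_comp {f g : ℝ → EuclideanSpace ℝ (Fin 3)} (hf : Continuous f)
    (hg : Continuous g) : Continuous fun s => cross3 (f s) (g s) := by
  unfold cross3
  refine ((EuclideanSpace.equiv (Fin 3) ℝ).symm.continuous).comp ?_
  refine continuous_pi fun i => ?_
  have hfc : ∀ j : Fin 3, Continuous fun s => f s j :=
    fun j => ((EuclideanSpace.proj (𝕜 := ℝ) j).continuous).comp hf
  have hgc : ∀ j : Fin 3, Continuous fun s => g s j :=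
    fun j => ((EuclideanSpace.proj (𝕜 := ℝ) j).continuous).comp hg
  fin_cases i <;> simp <;> fun_prop

lemma slope_tendsto (hd1 : Differentiable ℝ γ) :
    Tendsto (fun s : ℝ => s⁻¹ • (γ s - γ 0)) (𝓝[≠] 0) (𝓝 (deriv γ 0)) := by
  have h := hasDerivAt_iff_tendsto_slope.mp (hd1 0).hasDerivAt
  apply h.congr
  intro s
  simp [slope, vsub_eq_sub]

end Geometry

section Geometry2

variable {γ : ℝ → EuclideanSpace ℝ (Fin 3)}

lemma tendsto_normsq_div_sq (hd1 : Differentiable ℝ γ) (harc : ‖deriv γ 0‖ = 1) :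
    Tendsto (fun s : ℝ => ‖γ 0 - γ s‖^2 / s^2) (𝓝[≠] 0) (𝓝 1) := by
  have h := ((slope_tendsto hd1).norm.mul (slope_tendsto hd1).norm)
  rw [harc, mul_one] at h
  apply h.congr'
  filter_upwards [self_mem_nhdsWithin] with s hs
  have hs0 : s ≠ 0 := hs
  rw [norm_smul, norm_inv, Real.norm_eq_abs, norm_sub_rev]
  rw [← norm_sub_rev (γ s) (γ 0)] at *
  field_simp
  rw [sq_abs]
  ring

lemma tendsto_inner_cross_div_sq (hd1 : Differentiable ℝ γ) (hd2 : Differentiable ℝ (deriv γ))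
    (hcont : Continuous (deriv (deriv γ))) :
    Tendsto (fun s : ℝ => (inner ℝ (γ 0 - γ s) (cross3 (deriv γ s) (γ s)) : ℝ) / s^2) (𝓝[≠] 0)
      (𝓝 (-(inner ℝ (deriv γ 0) (cross3 (deriv (deriv γ) 0) (γ 0)) : ℝ)/2)) := by
  have hg2 : ∀ s : ℝ, HasDerivAt (fun s : ℝ => s^2) (2*s) s := by
    intro s
    simpa using hasDerivAt_pow 2 s
  apply HasDerivAt.lhopital_zero_nhdsNE
    (f' := fun s => (inner ℝ (γ 0 - γ s) (cross3 (deriv (deriv γ) s) (γ s)) : ℝ))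
    (g' := fun s => 2*s)
  · filter_upwards with s
    exact hasDerivAt_inner_cross hd1 hd2 s
  · filter_upwards with s
    exact hg2 s
  · filter_upwards [self_mem_nhdsWithin] with s hs
    have : s ≠ 0 := hs
    positivity
  · have := (hasDerivAt_inner_cross hd1 hd2 0).continuousAt.tendsto.mono_left
      (nhdsWithin_le_nhds (s := {(0:ℝ)}ᶜ))
    simpa using this
  · have : Tendsto (fun s : ℝ => s^2) (𝓝 0) (𝓝 0) := by
      have := (hg2 0).continuousAt.tendsto
      simpa using this
    exact this.mono_left nhdsWithin_le_nhds
  · have hX : Tendsto (fun s => cross3 (deriv (deriv γ) s) (γ s)) (𝓝[≠] 0)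
        (𝓝 (cross3 (deriv (deriv γ) 0) (γ 0))) :=
      ((continuous_cross3_comp hcont hd1.continuous).tendsto 0).mono_left nhdsWithin_le_nhds
    have h := ((slope_tendsto hd1).inner hX).mul_const (-(1/2) : ℝ)
    rw [show (inner ℝ (deriv γ 0) (cross3 (deriv (deriv γ) 0) (γ 0)) : ℝ) * -(1/2)
      = -(inner ℝ (deriv γ 0) (cross3 (deriv (deriv γ) 0) (γ 0)) : ℝ)/2 by ring] at h
    apply h.congr'
    filter_upwards [self_mem_nhdsWithin] with s hs
    have hs0 : s ≠ 0 := hs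
    rw [real_inner_smul_left, inner_sub_left, inner_sub_left]
    set X := cross3 (deriv (deriv γ) s) (γ s)
    set p : ℝ := (inner ℝ (γ 0) X : ℝ) with hp
    set q : ℝ := (inner ℝ (γ s) X : ℝ) with hq
    field_simp
    ring

end Geometry2

theorem double_layer_kernel_continuous_extension
    (k : ℝ) (hk : 1/2 < k)
    (γ : ℝ → EuclideanSpace ℝ (Fin 3))
    (hγ : ContDiff ℝ 2 γ)
    (hsphere : ∀ s : ℝ, ‖γ s‖ = 1)
    (harc : ∀ s : ℝ, ‖deriv γ s‖ = 1) :
    let ν : ℂ := (-1 + Complex.I * Real.sqrt (4*k^2 - 1)) / 2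
    let Ck : ℂ := -1 / (4 * Complex.sin (ν * Real.pi))
    Tendsto
      (fun s : ℝ =>
        -Ck * deriv (fun x : ℝ => legendreP ν (x : ℂ)) (‖γ 0 - γ s‖^2 / 2 - 1)
          * ((inner ℝ (γ 0 - γ s) (cross3 (deriv γ s) (γ s)) : ℝ) : ℂ))
      (nhdsWithin 0 {(0 : ℝ)}ᶜ)
      (nhds (((-(1/(4*Real.pi)) *
        (inner ℝ (deriv γ 0) (cross3 (deriv (deriv γ) 0) (γ 0)) : ℝ) : ℝ) : ℂ))) := by
  intro ν Ck
  have h4k : 0 < 4*k^2 - 1 := by nlinarith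
  have hνim : ν.im ≠ 0 := by
    have hr : (0:ℝ) < Real.sqrt (4*k^2 - 1) := Real.sqrt_pos.mpr h4k
    have hv : ν = (-1 + Complex.I * Real.sqrt (4*k^2 - 1)) / 2 := rfl
    have : ν.im = Real.sqrt (4*k^2 - 1) / 2 := by
      rw [hv]
      simp [Complex.div_im, Complex.add_im, Complex.mul_im, Complex.normSq]
    rw [this]
    positivity
  have hsin : Complex.sin (ν * Real.pi) ≠ 0 := sin_nu_pi_ne_zero hνim
  have hd1 : Differentiable ℝ γ := hγ.differentiable (by norm_num)
  have h11 : ContDiff ℝ 1 (deriv γ) := by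
    have h2 : ContDiff ℝ (1 + 1 : ℕ) γ := by exact_mod_cast hγ
    exact (contDiff_succ_iff_deriv.mp (by exact_mod_cast h2)).2.2
  have hd2 : Differentiable ℝ (deriv γ) := h11.differentiable (by norm_num)
  have hcont : Continuous (deriv (deriv γ)) := (contDiff_one_iff_deriv.mp h11).2
  have hI := tendsto_inner_cross_div_sq hd1 hd2 hcont
  have hN := tendsto_normsq_div_sq hd1 (harc 0)
  have hs2t : Tendsto (fun s : ℝ => s^2) (𝓝[≠] 0) (𝓝 0) := by
    have : Tendsto (fun s : ℝ => s^2) (𝓝 0) (𝓝 0) := by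
      simpa using (continuous_pow 2).tendsto (0:ℝ)
    exact this.mono_left nhdsWithin_le_nhds
  have hev : ∀ᶠ s in 𝓝[≠](0:ℝ), s ≠ 0 ∧ 1/2 < ‖γ 0 - γ s‖^2/s^2 ∧ ‖γ 0 - γ s‖^2/s^2 < 2
      ∧ s^2 < 1/8 := by
    filter_upwards [self_mem_nhdsWithin,
      hN.eventually (Ioo_mem_nhds (by norm_num : (1:ℝ)/2 < 1) (by norm_num : (1:ℝ) < 2)),
      hs2t.eventually (Iio_mem_nhds (by norm_num : (0:ℝ) < 1/8))] with s hs0 hio hsq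
    exact ⟨hs0, hio.1, hio.2, hsq⟩
  have hN0 : Tendsto (fun s : ℝ => ‖γ 0 - γ s‖^2) (𝓝[≠] 0) (𝓝 0) := by
    have h := hN.mul hs2t
    rw [one_mul] at h
    apply h.congr'
    filter_upwards [self_mem_nhdsWithin] with s hs0
    have : s ≠ 0 := hs0
    field_simp
  have hw_t : Tendsto (fun s : ℝ => ((1 - ‖γ 0 - γ s‖^2/4 : ℝ) : ℂ)) (𝓝[≠] 0)
      (𝓝[Complex.stolzSet 2] 1) := by
    rw [tendsto_nhdsWithin_iff]
    constructor
    · have h1 : Tendsto (fun s : ℝ => (1 - ‖γ 0 - γ s‖^2/4 : ℝ)) (𝓝[≠] 0) (𝓝 1) := by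
        have := (tendsto_const_nhds (x := (1:ℝ)) (f := 𝓝[≠] (0:ℝ))).sub (hN0.div_const 4)
        simpa using this
      exact (Complex.continuous_ofReal.tendsto 1).comp h1
    · filter_upwards [hev] with s hs
      obtain ⟨hs0, h1, h2, h3⟩ := hs
      have hsq : (0:ℝ) < s^2 := by positivity
      have hNpos : 0 < ‖γ 0 - γ s‖^2 := by nlinarith [(lt_div_iff₀ hsq).mp h1]
      have hNlt : ‖γ 0 - γ s‖^2 < 2*s^2 := by nlinarith [(div_lt_iff₀ hsq).mp h2]
      have hN4 : ‖γ 0 - γ s‖^2 < 1/4 := by linarith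
      constructor
      · rw [show ((1 - ‖γ 0 - γ s‖^2/4 : ℝ) : ℂ) = (((1 - ‖γ 0 - γ s‖^2/4 : ℝ)) : ℂ) from rfl,
          Complex.norm_real, Real.norm_eq_abs, abs_lt]
        constructor <;> linarith
      · rw [show (1 : ℂ) - ((1 - ‖γ 0 - γ s‖^2/4 : ℝ) : ℂ) = ((‖γ 0 - γ s‖^2/4 : ℝ) : ℂ) by
          push_cast; ring, Complex.norm_real, Complex.norm_real, Real.norm_eq_abs,
          Real.norm_eq_abs]
        rw [abs_of_pos (by positivity), abs_of_pos (by linarith)]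
        linarith
  have hG : Tendsto (fun s : ℝ => ∑' m : ℕ, dcoef ν m * ((1 - ‖γ 0 - γ s‖^2/4 : ℝ) : ℂ)^m)
      (𝓝[≠] 0) (𝓝 (Lν ν)) := (abel_limit hνim).comp hw_t
  set T : ℝ := (inner ℝ (deriv γ 0) (cross3 (deriv (deriv γ) 0) (γ 0)) : ℝ) with hT
  have hIc : Tendsto (fun s : ℝ =>
      (((inner ℝ (γ 0 - γ s) (cross3 (deriv γ s) (γ s)) : ℝ) / s^2 : ℝ) : ℂ)) (𝓝[≠] 0)
      (𝓝 ((-T/2 : ℝ) : ℂ)) := (Complex.continuous_ofReal.tendsto _).comp hI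
  have hsN : Tendsto (fun s : ℝ => ((s^2 / ‖γ 0 - γ s‖^2 : ℝ) : ℂ)) (𝓝[≠] 0) (𝓝 1) := by
    have h := hN.inv₀ one_ne_zero
    rw [inv_one] at h
    have h2 : Tendsto (fun s : ℝ => (s^2 / ‖γ 0 - γ s‖^2 : ℝ)) (𝓝[≠] 0) (𝓝 1) := by
      apply h.congr'
      filter_upwards [hev] with s hs
      obtain ⟨hs0, h1, _, _⟩ := hs
      rw [inv_div]
    exact (Complex.continuous_ofReal.tendsto 1).comp h2
  have hmain : Tendsto (fun s : ℝ =>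
      2 * Ck * (∑' m : ℕ, dcoef ν m * ((1 - ‖γ 0 - γ s‖^2/4 : ℝ) : ℂ)^m)
        * (((inner ℝ (γ 0 - γ s) (cross3 (deriv γ s) (γ s)) : ℝ) / s^2 : ℝ) : ℂ)
        * ((s^2 / ‖γ 0 - γ s‖^2 : ℝ) : ℂ)) (𝓝[≠] 0)
      (𝓝 (2 * Ck * Lν ν * ((-T/2 : ℝ) : ℂ) * 1)) :=
    (((tendsto_const_nhds (x := 2*Ck)).mul hG).mul hIc).mul hsN
  have hval : 2 * Ck * Lν ν * ((-T/2 : ℝ) : ℂ) * 1 = ((-(1/(4*Real.pi)) * T : ℝ) : ℂ) := by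
    rw [Lν_eq hνim]
    have hCk : Ck = -1 / (4 * Complex.sin (ν * Real.pi)) := rfl
    rw [hCk]
    have hpi : (Real.pi : ℂ) ≠ 0 := Complex.ofReal_ne_zero.mpr Real.pi_ne_zero
    push_cast
    field_simp
  rw [← hval]
  apply Tendsto.congr' _ hmain
  filter_upwards [hev] with s hs
  obtain ⟨hs0, h1, h2, h3⟩ := hs
  have hsq : (0:ℝ) < s^2 := by positivity
  have hNpos : 0 < ‖γ 0 - γ s‖^2 := by nlinarith [(lt_div_iff₀ hsq).mp h1]
  have hNlt : ‖γ 0 - γ s‖^2 < 2*s^2 := by nlinarith [(div_lt_iff₀ hsq).mp h2]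
  have hN4 : ‖γ 0 - γ s‖^2 < 1/4 := by linarith
  have hx : |1 - (‖γ 0 - γ s‖^2/2 - 1)| < 2 := by
    rw [abs_lt]
    constructor <;> linarith
  have hder := (hasDerivAt_legendreP hνim hx).deriv
  rw [hder]
  rw [show ((1:ℂ) - ((‖γ 0 - γ s‖^2/2 - 1 : ℝ) : ℂ))/2 = ((1 - ‖γ 0 - γ s‖^2/4 : ℝ) : ℂ) by
    push_cast; ring]
  set z : ℂ := ((1 - ‖γ 0 - γ s‖^2/4 : ℝ) : ℂ) with hzdef
  have hz1 : ‖z‖ < 1 := by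
    rw [hzdef, Complex.norm_real, Real.norm_eq_abs, abs_lt]
    constructor <;> linarith
  have h1z : (1:ℂ) - z = ((‖γ 0 - γ s‖^2/4 : ℝ) : ℂ) := by rw [hzdef]; push_cast; ring
  have h1z0 : (1:ℂ) - z ≠ 0 := by
    rw [h1z]
    exact Complex.ofReal_ne_zero.mpr (by positivity)
  have habel := abel_identity hνim hz1
  have hstep : (∑' n : ℕ, lc ν n * (n:ℂ) * z^(n-1) * (-(1/2:ℂ)))
      = (∑' m : ℕ, dcoef ν m * z^m)/(1 - z) * (-(1/2:ℂ)) := by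
    calc (∑' n : ℕ, lc ν n * (n:ℂ) * z^(n-1) * (-(1/2:ℂ)))
        = (∑' n : ℕ, (n:ℂ) * lc ν n * z^(n-1)) * (-(1/2:ℂ)) := by
          rw [← tsum_mul_right]
          exact tsum_congr fun n => by ring
      _ = ((1-z) * ∑' n : ℕ, (n:ℂ) * lc ν n * z^(n-1))/(1-z) * (-(1/2:ℂ)) := by
          rw [mul_div_cancel_left₀ _ h1z0]
      _ = (∑' m : ℕ, dcoef ν m * z^m)/(1 - z) * (-(1/2:ℂ)) := by rw [habel]
  rw [hstep, h1z]
  have hsC : ((s : ℝ) : ℂ) ≠ 0 := Complex.ofReal_ne_zero.mpr hs0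
  have hnC : ((‖γ 0 - γ s‖ : ℝ) : ℂ) ≠ 0 := by
    refine Complex.ofReal_ne_zero.mpr ?_
    intro h0
    rw [h0] at hNpos
    norm_num at hNpos
  push_cast
  field_simp
  ring
end
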